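/- arXiv:math/0605276 — 6 statements merged into one kernel-verified Lean document; each statement's English description precedes it below -/
import Mathlib

section
/- Let Γ be a group, ρ : Γ → Homeo(S¹) an action by homeomorphisms of the circle which is minimal and strongly proximal, and (B, ν) a standard probability space with a measurable quasi-invariant Γ-action. Let k ≥ 1 and let x ↦ A_x be a measurable Γ-equivariant map assigning to ν-a.e. x ∈ B a k-element subset A_x ⊆ S¹. Then for every nonempty open set U ⊆ S¹, the set { x ∈ B : A_x ⊆ U } has positive ν-measure. -/
noncomputable section

open MeasureTheory Set Function
open scoped ENNReal

/-- The group of self-homeomorphisms of a topological space, under composition. -/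
instance homeoGroup {X : Type*} [TopologicalSpace X] : Group (X ≃ₜ X) where
  mul f g := g.trans f
  one := Homeomorph.refl X
  inv := Homeomorph.symm
  mul_assoc f g h := rfl
  one_mul f := by ext x; rfl
  mul_one f := by ext x; rfl
  inv_mul_cancel f := by ext x; exact f.symm_apply_apply x

@[simp] lemma homeo_mul_apply {X : Type*} [TopologicalSpace X] (f g : X ≃ₜ X) (x : X) :
    (f * g) x = f (g x) := rfl

/-- The circle `S¹ = ℝ/ℤ`. -/
abbrev Circle' := UnitAddCircle


instance : Infinite Circle' := by
  have e := AddCircle.equivIco (1:ℝ) 0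
  have h : (Set.Ico (0:ℝ) (0+1)).Infinite := Set.Ico_infinite (by norm_num)
  exact (e.infinite_iff).2 h.to_subtype

/-- A homeomorphism of the circle `ℝ/ℤ` is orientation-preserving if it lifts to a strictly
increasing homeomorphism `F` of `ℝ` with `F (x + 1) = F x + 1`. -/
def IsOrientationPreserving (h : Circle' ≃ₜ Circle') : Prop :=
  ∃ F : ℝ ≃ₜ ℝ, StrictMono F ∧ (∀ x : ℝ, F (x + 1) = F x + 1) ∧
    ∀ x : ℝ, h (x : Circle') = ((F x : ℝ) : Circle')

/-- An action on the circle is minimal and strongly proximal if every proper closed subset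
can be moved inside any nonempty open subset by some group element. -/
def IsMinimalStronglyProximal {Γ : Type*} [Group Γ] (ρ : Γ →* (Circle' ≃ₜ Circle')) : Prop :=
  ∀ K : Set Circle', IsClosed K → K ≠ Set.univ → ∀ U : Set Circle', IsOpen U → U.Nonempty →
    ∃ γ : Γ, (ρ γ) '' K ⊆ U

/-- If a group `Γ` acts on the circle minimally and strongly proximally, acts quasi-invariantly
on a probability space `(B, ν)`, and `x ↦ A_x` is a measurable `Γ`-equivariant assignment of
`k`-point subsets of the circle, then for every nonempty open `U ⊆ S¹` the set
`{x : A_x ⊆ U}` has positive measure. -/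
theorem statement11 {Γ B : Type*} [Group Γ]
    [MeasurableSpace B] [StandardBorelSpace B] [MulAction Γ B]
    (ν : Measure B) [IsProbabilityMeasure ν]
    (hact : ∀ γ : Γ, Measurable fun x : B => γ • x)
    (hqi : ∀ γ : Γ, Measure.map (fun x : B => γ • x) ν ≪ ν ∧
      ν ≪ Measure.map (fun x : B => γ • x) ν)
    (ρ : Γ →* (Circle' ≃ₜ Circle'))
    (hmsp : IsMinimalStronglyProximal ρ)
    (k : ℕ) (hk : 1 ≤ k)
    (A : B → Finset Circle')
    (hAmeas : ∀ U : Set Circle', IsOpen U → MeasurableSet {x : B | (A x : Set Circle') ⊆ U})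
    (hAcard : ∀ᵐ x ∂ν, (A x).card = k)
    (hAequiv : ∀ γ : Γ, ∀ᵐ x ∂ν, (A (γ • x) : Set Circle') = (ρ γ) '' (A x)) :
    ∀ U : Set Circle', IsOpen U → U.Nonempty →
      0 < ν {x : B | (A x : Set Circle') ⊆ U} := by
  intro U hU hUne
  by_contra hpos
  push_neg at hpos
  set S := {x : B | (A x : Set Circle') ⊆ U} with hSdef
  have hS0 : ν S = 0 := le_antisymm hpos zero_le
  have hSmeas : MeasurableSet S := hAmeas U hU
  -- key claim
  have key : ∀ V : Set Circle', IsOpen V → V.Nonempty →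
      ν {x : B | (A x : Set Circle') ⊆ Vᶜ} = 0 := by
    intro V hVopen hVne
    have hKne : Vᶜ ≠ Set.univ := by
      intro h
      obtain ⟨v, hv⟩ := hVne
      have : v ∈ (Vᶜ : Set Circle') := h ▸ Set.mem_univ v
      exact this hv
    obtain ⟨γ, hγ⟩ := hmsp Vᶜ hVopen.isClosed_compl hKne U hU hUne
    have hT : ν ((fun x => γ • x) ⁻¹' S) = 0 := by
      rw [← Measure.map_apply (hact γ) hSmeas]
      exact (hqi γ).1 hS0
    obtain ⟨N, hN0, hN⟩ : ∃ N : Set B, ν N = 0 ∧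
        ∀ x ∉ N, (A (γ • x) : Set Circle') = (ρ γ) '' (A x) := by
      refine ⟨{x | ¬ ((A (γ • x) : Set Circle') = (ρ γ) '' (A x))}, ?_, ?_⟩
      · exact (hAequiv γ)
      · intro x hx; simpa using hx
    have hsub : {x : B | (A x : Set Circle') ⊆ Vᶜ} ⊆ ((fun x => γ • x) ⁻¹' S) ∪ N := by
      intro x hx
      by_cases hxN : x ∈ N
      · exact Or.inr hxN
      · left
        show (A (γ • x) : Set Circle') ⊆ U
        rw [hN x hxN]
        exact (Set.image_mono hx).trans hγ
    exact le_antisymm (le_trans (measure_mono hsub)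
      (le_trans (measure_union_le _ _) (by rw [hT, hN0, add_zero]))) zero_le
  -- countable cover
  set ℬ : Set (Set Circle') := {V ∈ TopologicalSpace.countableBasis Circle' | V.Nonempty}
  have hℬc : ℬ.Countable :=
    (TopologicalSpace.countable_countableBasis Circle').mono (Set.sep_subset _ _)
  have hcover : (Set.univ : Set B) ⊆ ⋃ V ∈ ℬ, {x : B | (A x : Set Circle') ⊆ Vᶜ} := by
    intro x _
    have hfin : ((A x : Set Circle')).Finite := (A x).finite_toSet
    have hcne : ((A x : Set Circle'))ᶜ.Nonempty := hfin.infinite_compl.nonempty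
    obtain ⟨y, hy⟩ := hcne
    have hopen : IsOpen ((A x : Set Circle'))ᶜ := hfin.isClosed.isOpen_compl
    obtain ⟨V, hVb, hyV, hVsub⟩ :=
      (TopologicalSpace.isBasis_countableBasis Circle').exists_subset_of_mem_open hy hopen
    refine Set.mem_biUnion ⟨hVb, ⟨y, hyV⟩⟩ ?_
    show (A x : Set Circle') ⊆ Vᶜ
    intro z hz hzV
    exact hVsub hzV hz
  have hnull : ν (⋃ V ∈ ℬ, {x : B | (A x : Set Circle') ⊆ Vᶜ}) = 0 := by
    refine (measure_biUnion_null_iff hℬc).2 ?_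
    intro V hV
    exact key V (TopologicalSpace.isOpen_of_mem_countableBasis hV.1) hV.2
  have : ν (Set.univ : Set B) = 0 := le_antisymm (le_trans (measure_mono hcover) hnull.le) zero_le
  simp [measure_univ] at this
end
end

section
/- Let G be a locally compact, second countable Hausdorff topological group and Λ ≤ G a dense subgroup. Let ρ : Λ → Homeo₊(S¹) be a homomorphism whose action on S¹ is minimal and strongly proximal. Let (B, ν) be a standard probability space with a measurable quasi-invariant G-action such that for every measurable E ⊆ B the map g ↦ ν(gE △ E) is continuous on G. Suppose Φ : B → Prob(S¹) is a measurable map which is Λ-equivariant (for every λ ∈ Λ, Φ(λ·x) = ρ(λ)_*Φ(x) for ν-a.e. x), and suppose that for every nonempty open U ⊆ S¹ the set { x ∈ B : supp Φ(x) ⊆ U } has positive ν-measure. Then ρ extends uniquely to a continuous homomorphism ρ̄ : G → Homeo₊(S¹), where Homeo₊(S¹) carries the Polish topology of uniform convergence of homeomorphisms together with their inverses. -/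
noncomputable section

open MeasureTheory Set Function
open scoped ENNReal

/-- The (topological) support of a Borel measure on the circle. -/
def measSupport (μ : Measure Circle') : Set Circle' :=
  {p : Circle' | ∀ U : Set Circle', IsOpen U → p ∈ U → μ U ≠ 0}


namespace S13
open Filter Topology


lemma coe_add_int (x : ℝ) (k : ℤ) : ((x + k : ℝ) : Circle') = (x : Circle') := by
  have : ((k : ℝ) : Circle') = 0 := by
    rw [AddCircle.coe_eq_zero_iff]
    exact ⟨k, by simp⟩
  have h2 : ((x + k : ℝ) : Circle') = (x : Circle') + ((k:ℝ) : Circle') := by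
    push_cast; rfl
  rw [h2, this, add_zero]

lemma coe_sub_int (x : ℝ) (k : ℤ) : ((x - k : ℝ) : Circle') = (x : Circle') := by
  have := coe_add_int (x - k) k
  simpa using this.symm

lemma circle_eq_iff {a b : ℝ} : (a : Circle') = (b : Circle') ↔ ∃ k : ℤ, a = b + k := by
  constructor
  · intro h
    rw [QuotientAddGroup.eq] at h
    rcases (AddSubgroup.mem_zmultiples_iff).mp h with ⟨k, hk⟩
    refine ⟨-k, ?_⟩
    have : (k : ℝ) = -a + b := by simpa using hk
    push_cast
    linarith
  · rintro ⟨k, rfl⟩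
    exact (coe_add_int b k).symm ▸ rfl

lemma coe_sub_circle (a b : ℝ) : ((a - b : ℝ) : Circle') = (a : Circle') - (b : Circle') := by
  push_cast; rfl

lemma dist_coe_le (a b : ℝ) (k : ℤ) : dist (a : Circle') (b : Circle') ≤ |a - b - k| := by
  rw [dist_eq_norm, ← coe_sub_circle, ← coe_sub_int (a - b) k]
  exact QuotientAddGroup.norm_mk_le_norm.trans_eq (Real.norm_eq_abs _)

lemma norm_coe_circle (x : ℝ) : ‖(x : Circle')‖ = |x - round x| := UnitAddCircle.norm_eq

lemma exists_rep_close (z : Circle') (c : ℝ) :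
    ∃ t : ℝ, (t : Circle') = z ∧ |t - c| = dist z ((c : ℝ) : Circle') := by
  obtain ⟨a, rfl⟩ := QuotientAddGroup.mk_surjective z
  refine ⟨a - round (a - c), coe_sub_int a _, ?_⟩
  rw [dist_eq_norm, ← coe_sub_circle, norm_coe_circle]
  ring_nf



lemma measure_compl_measSupport (μ : Measure Circle') : μ (measSupport μ)ᶜ = 0 := by
  obtain ⟨b, hbc, -, hb⟩ := TopologicalSpace.exists_countable_basis Circle'
  have hsub : (measSupport μ)ᶜ ⊆ ⋃₀ {s ∈ b | μ s = 0} := by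
    intro p hp
    simp only [mem_compl_iff, measSupport, mem_setOf_eq, not_forall] at hp
    obtain ⟨U, hU, hpU, hμU⟩ := hp
    obtain ⟨s, hs, hps, hsU⟩ := hb.exists_subset_of_mem_open hpU hU
    refine ⟨s, ⟨hs, le_antisymm (le_trans (measure_mono hsU) ?_) zero_le⟩, hps⟩
    simp only [not_not] at hμU
    exact le_of_eq hμU
  refine measure_mono_null hsub ?_
  exact (measure_sUnion_null_iff (hbc.mono (sep_subset _ _))).mpr fun s hs => hs.2

lemma measSupport_nonempty (μ : Measure Circle') [IsProbabilityMeasure μ] :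
    (measSupport μ).Nonempty := by
  by_contra h
  rw [not_nonempty_iff_eq_empty] at h
  have := measure_compl_measSupport μ
  rw [h, compl_empty] at this
  simp [measure_univ] at this

lemma measSupport_subset_closedBall {μ : Measure Circle'} {c : Circle'} {r : ℝ}
    (h : μ (Metric.ball c r)ᶜ = 0) : measSupport μ ⊆ Metric.closedBall c r := by
  intro p hp
  by_contra hpc
  have hopen : IsOpen (Metric.closedBall c r)ᶜ := Metric.isClosed_closedBall.isOpen_compl
  have : μ (Metric.closedBall c r)ᶜ ≠ 0 := hp _ hopen hpc
  exact this (measure_mono_null (compl_subset_compl.mpr Metric.ball_subset_closedBall) h)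

lemma measSupport_map (h : Circle' ≃ₜ Circle') (μ : Measure Circle') :
    measSupport (Measure.map h μ) ⊆ (h : Circle' → Circle') '' measSupport μ := by
  intro z hz
  refine ⟨h.symm z, ?_, h.apply_symm_apply z⟩
  intro U hU hzU
  have him : IsOpen ((h : Circle' → Circle') '' U) := h.isOpen_image.mpr hU
  have hmem : z ∈ (h : Circle' → Circle') '' U := ⟨h.symm z, hzU, h.apply_symm_apply z⟩
  have := hz _ him hmem
  rwa [Measure.map_apply h.continuous.measurable him.measurableSet,
    h.injective.preimage_image U] at this

lemma measSupport_subset_of_null {μ : Measure Circle'} {S : Set Circle'}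
    (hS : IsClosed S) (h : μ Sᶜ = 0) : measSupport μ ⊆ S := by
  intro p hp
  by_contra hpc
  exact hp _ hS.isOpen_compl hpc h



lemma lift_nat_shift {F : ℝ → ℝ} (hper : ∀ x, F (x + 1) = F x + 1) (x : ℝ) (n : ℕ) :
    F (x + n) = F x + n := by
  induction n with
  | zero => simp
  | succ n ih =>
      have h : x + ((n+1 : ℕ) : ℝ) = (x + n) + 1 := by push_cast; ring
      rw [h, hper, ih]; push_cast; ring

lemma lift_int_shift {F : ℝ → ℝ} (hper : ∀ x, F (x + 1) = F x + 1) (x : ℝ) (k : ℤ) :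
    F (x + k) = F x + k := by
  rcases Int.eq_nat_or_neg k with ⟨n, rfl | rfl⟩
  · have := lift_nat_shift hper x n
    push_cast
    push_cast at this
    exact this
  · have := lift_nat_shift hper (x - n) n
    have h2 : x - (n:ℝ) + n = x := by ring
    rw [h2] at this
    push_cast
    rw [show x + -(n:ℝ) = x - n by ring]
    linarith

lemma comb' {F : ℝ → ℝ} (hF : StrictMono F) {u : ℝ} (hu0 : 0 < u) (hu2 : u ≤ 1 / 2)
    (hper : ∀ x, F (x + 1) = F x + 1)
    {T : ℤ → ℝ} {K : ℤ → ℤ}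
    (hTj : ∀ j : ℤ, |T j - j * u| ≤ u / 4)
    (hKj : ∀ j : ℤ, |F (T j) - j * u - K j| ≤ u / 4) (s : ℝ) :
    |F s - s - K 0| ≤ 2 * u := by
  have hTmono : ∀ j j' : ℤ, j < j' → T j < T j' := by
    intro j j' hjj
    have h1 := abs_le.mp (hTj j)
    have h2 := abs_le.mp (hTj j')
    have hcast : (j:ℝ) + 1 ≤ (j':ℝ) := by exact_mod_cast hjj
    nlinarith [h1.1, h1.2, h2.1, h2.2, hu0]
  have hKstep : ∀ j : ℤ, K (j + 1) = K j := by
    intro j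
    have hB2 : F (T j) < F (T (j+1)) := hF (hTmono j (j+1) (by omega))
    have hB1 : F (T (j+1)) < F (T j) + 1 := by
      have hlt : T (j+1) < T j + 1 := by
        have h1 := abs_le.mp (hTj j)
        have h2 := abs_le.mp (hTj (j+1))
        have hc : ((j+1 : ℤ):ℝ) = (j:ℝ) + 1 := by push_cast; ring
        rw [hc] at h2
        nlinarith [h1.1, h2.2, hu0, hu2]
      calc F (T (j+1)) < F (T j + 1) := hF hlt
        _ = F (T j) + 1 := hper _
    have h1 := abs_le.mp (hKj j)
    have h2 := abs_le.mp (hKj (j+1))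
    have hc : ((j+1 : ℤ):ℝ) = (j:ℝ) + 1 := by push_cast; ring
    rw [hc] at h2
    have hle : (K (j+1) : ℝ) < (K j : ℝ) + 1 := by nlinarith [h1.2, h2.1, hu0, hu2]
    have hge : (K j : ℝ) < (K (j+1) : ℝ) + 1 := by nlinarith [h1.1, h2.2, hu0, hu2]
    have hle' : K (j+1) < K j + 1 := by exact_mod_cast hle
    have hge' : K j < K (j+1) + 1 := by exact_mod_cast hge
    omega
  have hKconst : ∀ j : ℤ, K j = K 0 := by
    intro j
    induction j using Int.induction_on with
    | zero => rfl
    | succ n ih =>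
        have := hKstep n
        omega
    | pred n ih =>
        have h := hKstep (-(n:ℤ) - 1)
        have hx : (-(n:ℤ) - 1 + 1 : ℤ) = -(n:ℤ) := by ring
        rw [hx] at h
        omega
  obtain ⟨j, hPj, hgr⟩ : ∃ j : ℤ, T j ≤ s ∧ ∀ z : ℤ, T z ≤ s → z ≤ j := by
    refine Int.exists_greatest_of_bdd ⟨⌈(s + 1)/u⌉, fun z hz => ?_⟩ ⟨⌊(s - 1)/u⌋, ?_⟩
    · have h1 := (abs_le.mp (hTj z)).1
      have hzu : (z:ℝ) * u ≤ s + u/4 := by linarith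
      have hz1 : (z:ℝ) ≤ (s + 1)/u := by
        rw [le_div_iff₀ hu0]
        nlinarith [hu0, hu2]
      exact_mod_cast hz1.trans (Int.le_ceil _)
    · have h1 := (abs_le.mp (hTj ⌊(s - 1)/u⌋)).2
      have hfl : ((⌊(s - 1)/u⌋ : ℤ) : ℝ) ≤ (s - 1)/u := Int.floor_le _
      have hmul : ((⌊(s - 1)/u⌋ : ℤ) : ℝ) * u ≤ s - 1 := by
        have h5 : ((⌊(s - 1)/u⌋ : ℤ) : ℝ) * u ≤ (s - 1)/u * u :=
          mul_le_mul_of_nonneg_right hfl hu0.le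
        rwa [div_mul_cancel₀ _ hu0.ne'] at h5
      linarith [hu0, hu2]
  have hs2 : s ≤ T (j + 1) := by
    by_contra hcon
    push_neg at hcon
    have := hgr (j+1) (le_of_lt hcon)
    omega
  have hFs1 : F (T j) ≤ F s := hF.monotone hPj
  have hFs2 : F s ≤ F (T (j+1)) := hF.monotone hs2
  have h1 := abs_le.mp (hKj j)
  have h2 := abs_le.mp (hKj (j+1))
  have h3 := abs_le.mp (hTj j)
  have h4 := abs_le.mp (hTj (j+1))
  have hc : ((j+1 : ℤ):ℝ) = (j:ℝ) + 1 := by push_cast; ring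
  rw [hc] at h2 h4
  rw [hKconst j] at h1
  rw [hKconst (j+1)] at h2
  rw [abs_le]
  constructor
  · nlinarith [h1.1, h4.2, hu0, hu2]
  · nlinarith [h2.2, h3.1, hu0, hu2]

lemma comb {F : ℝ → ℝ} (hF : StrictMono F) (hper : ∀ x, F (x + 1) = F x + 1)
    {m : ℕ} (hm : 2 ≤ m) {t : ℕ → ℝ} {k : ℕ → ℤ}
    (ht : ∀ i, i < m → |t i - i / m| ≤ 1 / (4 * m))
    (hk : ∀ i, i < m → |F (t i) - i / m - k i| ≤ 1 / (4 * m)) (s : ℝ) :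
    ∃ K : ℤ, |F s - s - K| ≤ 2 / m := by
  have hm0 : (0:ℝ) < m := by positivity
  have hmz : (m:ℤ) ≠ 0 := by positivity
  set u : ℝ := 1 / (m:ℝ) with hu
  have hu0 : 0 < u := by positivity
  have hmu : (m:ℝ) * u = 1 := by rw [hu]; field_simp
  have hu2 : u ≤ 1/2 := by
    rw [hu, div_le_div_iff₀ hm0 two_pos]
    norm_num
    exact_mod_cast le_trans hm (le_refl m)
  have h14 : (1:ℝ) / (4 * m) = u / 4 := by rw [hu]; field_simp
  set T : ℤ → ℝ := fun j => t (j % (m:ℤ)).toNat + ((j / (m:ℤ) : ℤ) : ℝ) with hT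
  set K : ℤ → ℤ := fun j => k (j % (m:ℤ)).toNat with hK
  have hdec : ∀ j : ℤ, ((j % (m:ℤ)).toNat < m) ∧
      ((j:ℝ) = (m:ℝ) * ((j / (m:ℤ) : ℤ) : ℝ) + (((j % (m:ℤ)).toNat : ℕ) : ℝ)) := by
    intro j
    have h1 : 0 ≤ j % (m:ℤ) := Int.emod_nonneg j hmz
    have h2 : j % (m:ℤ) < m := Int.emod_lt_of_pos j (by positivity)
    constructor
    · omega
    · have h3 : (m:ℤ) * (j / (m:ℤ)) + ((j % (m:ℤ)).toNat : ℤ) = j := by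
        have h4 := Int.mul_ediv_add_emod j (m:ℤ)
        have h5 : ((j % (m:ℤ)).toNat : ℤ) = j % (m:ℤ) := Int.toNat_of_nonneg h1
        rw [h5]
        linarith [h4]
      exact_mod_cast (congrArg (Int.cast : ℤ → ℝ) h3).symm
  have hTj : ∀ j : ℤ, |T j - (j:ℝ) * u| ≤ u / 4 := by
    intro j
    obtain ⟨hi, hj⟩ := hdec j
    have key : (j:ℝ) * u = ((j / (m:ℤ) : ℤ) : ℝ) + ((j % (m:ℤ)).toNat : ℝ) * u := by
      calc (j:ℝ) * u = ((m:ℝ) * ((j / (m:ℤ) : ℤ) : ℝ) + ((j % (m:ℤ)).toNat : ℝ)) * u := by rw [← hj]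
        _ = ((j / (m:ℤ) : ℤ) : ℝ) * ((m:ℝ) * u) + ((j % (m:ℤ)).toNat : ℝ) * u := by ring
        _ = _ := by rw [hmu]; ring
    have hdivu : (((j % (m:ℤ)).toNat : ℕ) : ℝ) / (m:ℝ) = ((j % (m:ℤ)).toNat : ℝ) * u := by
      rw [hu]; ring
    have heq : T j - (j:ℝ) * u = t (j % (m:ℤ)).toNat - ((j % (m:ℤ)).toNat : ℝ) / (m:ℝ) := by
      rw [hT, key, hdivu]; ring
    rw [heq, ← h14]
    exact ht _ hi
  have hKj : ∀ j : ℤ, |F (T j) - (j:ℝ) * u - ((K j : ℤ) : ℝ)| ≤ u / 4 := by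
    intro j
    obtain ⟨hi, hj⟩ := hdec j
    have key : (j:ℝ) * u = ((j / (m:ℤ) : ℤ) : ℝ) + ((j % (m:ℤ)).toNat : ℝ) * u := by
      calc (j:ℝ) * u = ((m:ℝ) * ((j / (m:ℤ) : ℤ) : ℝ) + ((j % (m:ℤ)).toNat : ℝ)) * u := by rw [← hj]
        _ = ((j / (m:ℤ) : ℤ) : ℝ) * ((m:ℝ) * u) + ((j % (m:ℤ)).toNat : ℝ) * u := by ring
        _ = _ := by rw [hmu]; ring
    have hdivu : (((j % (m:ℤ)).toNat : ℕ) : ℝ) / (m:ℝ) = ((j % (m:ℤ)).toNat : ℝ) * u := by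
      rw [hu]; ring
    have hFT : F (T j) = F (t (j % (m:ℤ)).toNat) + ((j / (m:ℤ) : ℤ) : ℝ) := by
      rw [hT]
      exact lift_int_shift hper _ _
    have heq : F (T j) - (j:ℝ) * u - ((K j : ℤ) : ℝ)
        = F (t (j % (m:ℤ)).toNat) - ((j % (m:ℤ)).toNat : ℝ) / (m:ℝ) - ((k (j % (m:ℤ)).toNat : ℤ) : ℝ) := by
      rw [hFT, key, hdivu, hK]; ring
    rw [heq, ← h14]
    exact hk _ hi
  have hfin := comb' hF hu0 hu2 hper hTj hKj s
  refine ⟨K 0, ?_⟩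
  have h2u : 2 * u = 2 / (m:ℝ) := by rw [hu]; ring
  rw [← h2u]
  exact hfin




lemma band {f g : Circle' ≃ₜ Circle'} {F Gf : ℝ → ℝ}
    (hFl : ∀ x : ℝ, f (x : Circle') = ((F x : ℝ) : Circle'))
    (hGl : ∀ x : ℝ, g (x : Circle') = ((Gf x : ℝ) : Circle'))
    (hFc : Continuous F) (hGc : Continuous Gf)
    (hd : dist (f : C(Circle',Circle')) (g : C(Circle',Circle')) < 1/4) :
    ∃ c : ℤ, ∀ x : ℝ,
      |F x - Gf x - c| ≤ dist (f : C(Circle',Circle')) (g : C(Circle',Circle')) := by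
  set d : ℝ := dist (f : C(Circle',Circle')) (g : C(Circle',Circle')) with hddef
  have hd0 : 0 ≤ d := dist_nonneg
  have hclose : ∀ x : ℝ, |F x - Gf x - round (F x - Gf x)| ≤ d := by
    intro x
    have h1 : dist (f (x : Circle')) (g (x : Circle')) ≤ d :=
      ContinuousMap.dist_apply_le_dist (f := (f : C(Circle',Circle')))
        (g := (g : C(Circle',Circle'))) (x : Circle')
    rw [hFl, hGl, dist_eq_norm, ← coe_sub_circle, norm_coe_circle] at h1
    exact h1
  set cf : ℝ → ℤ := fun x => round (F x - Gf x) with hcfdef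
  have hlc : IsLocallyConstant cf := by
    rw [IsLocallyConstant.iff_eventually_eq]
    intro x
    have hcont : Continuous fun y => F y - Gf y := hFc.sub hGc
    have hev : ∀ᶠ y in 𝓝 x, dist (F y - Gf y) (F x - Gf x) < 1/4 :=
      Metric.tendsto_nhds.mp (hcont.tendsto x) (1/4) (by norm_num)
    refine hev.mono fun y hy => ?_
    have h1 := hclose x
    have h2 := hclose y
    have u3 : |(F y - Gf y) - (F x - Gf x)| < 1/4 := by rw [← Real.dist_eq]; exact hy
    show round (F y - Gf y) = round (F x - Gf x)
    have e1 : |((round (F y - Gf y) : ℤ) : ℝ) - ((round (F x - Gf x) : ℤ) : ℝ)| < 1 := by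
      have w1 : |((round (F y - Gf y) : ℤ) : ℝ) - ((round (F x - Gf x) : ℤ) : ℝ)|
          ≤ |((round (F y - Gf y) : ℤ) : ℝ) - (F y - Gf y)|
            + |(F y - Gf y) - ((round (F x - Gf x) : ℤ) : ℝ)| := abs_sub_le _ _ _
      have w2 : |(F y - Gf y) - ((round (F x - Gf x) : ℤ) : ℝ)|
          ≤ |(F y - Gf y) - (F x - Gf x)| + |(F x - Gf x) - ((round (F x - Gf x) : ℤ) : ℝ)| :=
        abs_sub_le _ _ _
      have w3 : |((round (F y - Gf y) : ℤ) : ℝ) - (F y - Gf y)|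
          = |(F y - Gf y) - ((round (F y - Gf y) : ℤ) : ℝ)| := abs_sub_comm _ _
      linarith
    have hint : |round (F y - Gf y) - round (F x - Gf x)| < 1 := by exact_mod_cast e1
    have := abs_lt.mp hint
    omega
  have hconst : ∀ x : ℝ, cf x = cf 0 := fun x => hlc.apply_eq_of_preconnectedSpace x 0
  refine ⟨cf 0, fun x => ?_⟩
  rw [← hconst x]
  exact hclose x

lemma op_limit (hn : ℕ → Circle' ≃ₜ Circle') (h : Circle' ≃ₜ Circle')
    (hop : ∀ n, IsOrientationPreserving (hn n))
    (hconv : Tendsto (fun n => ((hn n : Circle' ≃ₜ Circle') : C(Circle', Circle'))) atTop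
      (𝓝 (h : C(Circle', Circle')))) :
    IsOrientationPreserving h := by
  choose FH hmono hper hlift using hop
  have hcs : CauchySeq (fun n => ((hn n) : C(Circle', Circle'))) := hconv.cauchySeq
  obtain ⟨N, hN⟩ := Metric.cauchySeq_iff.mp hcs (1/8) (by norm_num)
  -- shifted sequence
  set s : ℕ → C(Circle', Circle') := fun n => ((hn (N + n)) : C(Circle', Circle')) with hsdef
  have hsconv : Tendsto s atTop (𝓝 (h : C(Circle', Circle'))) := by
    have : Tendsto (fun n : ℕ => N + n) atTop atTop := by
      have := tendsto_add_atTop_nat N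
      simpa [Nat.add_comm] using this.congr (fun n => by omega)
    exact hconv.comp this
  have hsmall : ∀ n m : ℕ, dist (s n) (s m) < 1/8 :=
    fun n m => hN _ (Nat.le_add_right N n) _ (Nat.le_add_right N m)
  -- bands for each pair
  have hbands : ∀ n m : ℕ, ∃ c : ℤ, ∀ x : ℝ,
      |FH (N + n) x - FH (N + m) x - c| ≤ dist (s n) (s m) := by
    intro n m
    exact band (hlift (N+n)) (hlift (N+m)) (FH (N+n)).continuous (FH (N+m)).continuous
      ((hsmall n m).trans_le (by norm_num))
  choose cb hcb using fun n => hbands n 0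
  set Gs : ℕ → ℝ → ℝ := fun n x => FH (N + n) x - cb n with hGsdef
  have hkey : ∀ n m : ℕ, ∀ x : ℝ, |Gs n x - Gs m x| ≤ dist (s n) (s m) := by
    intro n m x
    obtain ⟨cc, hcc⟩ := hbands n m
    have hid : cc = cb n - cb m := by
      have h1 := hcb n 0
      have h2 := hcb m 0
      have h3 := hcc 0
      have habs : |((cc : ℝ)) - ((cb n : ℝ) - (cb m : ℝ))| < 1 := by
        have e1 := abs_le.mp h1
        have e2 := abs_le.mp h2
        have e3 := abs_le.mp h3
        have b1 := hsmall n 0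
        have b2 := hsmall m 0
        have b3 := hsmall n m
        rw [abs_lt]
        constructor <;> nlinarith [e1.1, e1.2, e2.1, e2.2, e3.1, e3.2]
      have hint : |cc - (cb n - cb m)| < 1 := by exact_mod_cast habs
      have := abs_lt.mp hint
      omega
    have := hcc x
    rw [hid] at this
    have heq : Gs n x - Gs m x = FH (N+n) x - FH (N+m) x - ((cb n : ℝ) - (cb m : ℝ)) := by
      rw [hGsdef]; ring
    rw [heq]
    calc |FH (N+n) x - FH (N+m) x - ((cb n : ℝ) - (cb m : ℝ))|
        = |FH (N+n) x - FH (N+m) x - (((cb n - cb m : ℤ)) : ℝ)| := by push_cast; ring_nf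
      _ ≤ dist (s n) (s m) := this
  -- distances go to zero
  have hdist0 : Tendsto (fun n => dist (s n) (h : C(Circle',Circle'))) atTop (𝓝 0) :=
    tendsto_iff_dist_tendsto_zero.mp hsconv
  -- pointwise limits
  have hptcauchy : ∀ x : ℝ, CauchySeq (fun n => Gs n x) := by
    intro x
    rw [Metric.cauchySeq_iff]
    intro ε hε
    obtain ⟨M, hM⟩ := Metric.tendsto_atTop.mp hdist0 (ε/2) (by linarith)
    refine ⟨M, fun n hn m hm => ?_⟩
    have h1 : dist (s n) ((h : C(Circle',Circle'))) < ε/2 := by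
      have := hM n hn
      rwa [Real.dist_0_eq_abs, abs_of_nonneg dist_nonneg] at this
    have h2 : dist (s m) ((h : C(Circle',Circle'))) < ε/2 := by
      have := hM m hm
      rwa [Real.dist_0_eq_abs, abs_of_nonneg dist_nonneg] at this
    have h3 : dist (s n) (s m) < ε := by
      calc dist (s n) (s m) ≤ dist (s n) (h : C(Circle',Circle'))
            + dist ((h : C(Circle',Circle'))) (s m) := dist_triangle _ _ _
        _ < ε := by rw [dist_comm ((h : C(Circle',Circle'))) (s m)]; linarith
    calc dist (Gs n x) (Gs m x) = |Gs n x - Gs m x| := Real.dist_eq _ _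
      _ ≤ dist (s n) (s m) := hkey n m x
      _ < ε := h3
  have hptlim : ∀ x : ℝ, ∃ L : ℝ, Tendsto (fun n => Gs n x) atTop (𝓝 L) :=
    fun x => cauchySeq_tendsto_of_complete (hptcauchy x)
  set Fl : ℝ → ℝ := fun x => (hptlim x).choose with hFldef
  have hFl : ∀ x, Tendsto (fun n => Gs n x) atTop (𝓝 (Fl x)) := fun x => (hptlim x).choose_spec
  -- uniform convergence
  have huc : TendstoUniformly Gs Fl atTop := by
    rw [Metric.tendstoUniformly_iff]
    intro ε hε
    obtain ⟨M, hM⟩ := Metric.tendsto_atTop.mp hdist0 (ε/4) (by linarith)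
    rw [eventually_atTop]
    refine ⟨M, fun n hn x => ?_⟩
    have hb : ∀ m, m ≥ M → dist (Gs n x) (Gs m x) ≤ ε/2 := by
      intro m hm
      have h1 : dist (s n) ((h : C(Circle',Circle'))) < ε/4 := by
        have := hM n hn
        rwa [Real.dist_0_eq_abs, abs_of_nonneg dist_nonneg] at this
      have h2 : dist (s m) ((h : C(Circle',Circle'))) < ε/4 := by
        have := hM m hm
        rwa [Real.dist_0_eq_abs, abs_of_nonneg dist_nonneg] at this
      calc dist (Gs n x) (Gs m x) = |Gs n x - Gs m x| := Real.dist_eq _ _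
        _ ≤ dist (s n) (s m) := hkey n m x
        _ ≤ dist (s n) (h : C(Circle',Circle'))
            + dist ((h : C(Circle',Circle'))) (s m) := dist_triangle _ _ _
        _ ≤ ε/2 := by rw [dist_comm ((h : C(Circle',Circle'))) (s m)]; linarith
    have hlim : Tendsto (fun m => dist (Gs n x) (Gs m x)) atTop (𝓝 (dist (Gs n x) (Fl x))) :=
      tendsto_const_nhds.dist (hFl x)
    have : dist (Gs n x) (Fl x) ≤ ε/2 :=
      le_of_tendsto hlim (eventually_atTop.mpr ⟨M, hb⟩)
    rw [dist_comm]
    linarith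
  have hFlcont : Continuous Fl :=
    huc.continuous (Eventually.of_forall fun n => (FH (N+n)).continuous.sub continuous_const).frequently
  have hFlmono : Monotone Fl := by
    intro a b hab
    refine le_of_tendsto_of_tendsto' (hFl a) (hFl b) fun n => ?_
    have := (hmono (N+n)).monotone hab
    simp only [hGsdef]
    linarith
  have hFlper : ∀ x : ℝ, Fl (x + 1) = Fl x + 1 := by
    intro x
    have h1 : Tendsto (fun n => Gs n (x+1)) atTop (𝓝 (Fl (x+1))) := hFl (x+1)
    have h2 : (fun n => Gs n (x+1)) = fun n => Gs n x + 1 := by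
      funext n
      simp only [hGsdef, hper]
      ring
    rw [h2] at h1
    have h3 : Tendsto (fun n => Gs n x + 1) atTop (𝓝 (Fl x + 1)) := by
      exact (hFl x).add tendsto_const_nhds
    exact tendsto_nhds_unique h1 h3
  have hcoecont : Continuous (fun x : ℝ => (x : Circle')) := AddCircle.continuous_mk' 1
  have hFllift : ∀ x : ℝ, ((Fl x : ℝ) : Circle') = h (x : Circle') := by
    intro x
    have h1 : Tendsto (fun n => ((Gs n x : ℝ) : Circle')) atTop (𝓝 ((Fl x : ℝ) : Circle')) :=
      (hcoecont.tendsto (Fl x)).comp (hFl x)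
    have h2 : (fun n => ((Gs n x : ℝ) : Circle')) = fun n => (hn (N + n)) (x : Circle') := by
      funext n
      rw [hGsdef]
      simp only
      rw [coe_sub_int, ← hlift (N+n)]
    rw [h2] at h1
    have h3 : Tendsto (fun n => (hn (N + n)) (x : Circle')) atTop (𝓝 (h (x : Circle'))) := by
      rw [tendsto_iff_dist_tendsto_zero]
      refine squeeze_zero (fun n => dist_nonneg) (fun n => ?_) hdist0
      exact ContinuousMap.dist_apply_le_dist (f := s n) (g := (h : C(Circle',Circle'))) _
    exact tendsto_nhds_unique h1 h3
  have hFlinj : Function.Injective Fl := by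
    intro a b hab
    have h1 : h (a : Circle') = h (b : Circle') := by
      rw [← hFllift a, ← hFllift b, hab]
    have h2 : (a : Circle') = (b : Circle') := h.injective h1
    obtain ⟨k, hk⟩ := circle_eq_iff.mp h2
    have h3 : Fl a = Fl b + k := by
      rw [hk, add_comm b (k:ℝ)]
      rw [show ((k:ℝ) + b) = b + k by ring]
      exact lift_int_shift hFlper b k
    have h4 : (k : ℝ) = 0 := by rw [hab] at h3; linarith
    have h5 : k = 0 := by exact_mod_cast h4
    rw [hk, h5]
    simp
  have hFlsm : StrictMono Fl := hFlmono.strictMono_of_injective hFlinj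
  have hFlint : ∀ (x : ℝ) (k : ℤ), Fl (x + k) = Fl x + k := lift_int_shift hFlper
  have hFlsurj : Function.Surjective Fl := by
    apply hFlcont.surjective
    · have hlow : ∀ x : ℝ, Fl 0 + (x - 1) ≤ Fl x := by
        intro x
        have h1 : Fl 0 + ((⌊x⌋ : ℤ) : ℝ) = Fl ((⌊x⌋ : ℤ) : ℝ) := by
          have := hFlint 0 ⌊x⌋
          rw [zero_add] at this
          linarith
        have h2 : Fl ((⌊x⌋ : ℤ) : ℝ) ≤ Fl x := hFlmono (Int.floor_le x)
        have h3 : x - 1 < ((⌊x⌋ : ℤ) : ℝ) := Int.sub_one_lt_floor x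
        linarith
      have htt : Tendsto (fun x : ℝ => Fl 0 + (x - 1)) atTop atTop := by
        apply tendsto_atTop_add_const_left atTop (Fl 0)
        have h5 := tendsto_atTop_add_const_right (atTop : Filter ℝ) (-1) tendsto_id
        exact h5.congr fun x => by simp only [id_eq]; ring
      exact tendsto_atTop_mono hlow htt
    · have hup : ∀ x : ℝ, Fl x ≤ Fl 0 + (x + 1) := by
        intro x
        have h1 : Fl 0 + ((⌈x⌉ : ℤ) : ℝ) = Fl ((⌈x⌉ : ℤ) : ℝ) := by
          have := hFlint 0 ⌈x⌉
          rw [zero_add] at this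
          linarith
        have h2 : Fl x ≤ Fl ((⌈x⌉ : ℤ) : ℝ) := hFlmono (Int.le_ceil x)
        have h3 : ((⌈x⌉ : ℤ) : ℝ) < x + 1 := Int.ceil_lt_add_one x
        linarith
      have htt : Tendsto (fun x : ℝ => Fl 0 + (x + 1)) atBot atBot := by
        apply tendsto_atBot_add_const_left atBot (Fl 0)
        have h5 := tendsto_atBot_add_const_right (atBot : Filter ℝ) 1 tendsto_id
        exact h5.congr fun x => by simp only [id_eq]
      exact tendsto_atBot_mono hup htt
  set E : ℝ ≃o ℝ := StrictMono.orderIsoOfSurjective Fl hFlsm hFlsurj with hEdef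
  have hEcoe : ⇑(E.toHomeomorph) = Fl := by
    rw [OrderIso.coe_toHomeomorph, hEdef, StrictMono.coe_orderIsoOfSurjective]
  refine ⟨E.toHomeomorph, ?_, ?_, ?_⟩
  · rw [hEcoe]; exact hFlsm
  · intro x; rw [hEcoe]; exact hFlper x
  · intro x; rw [hEcoe]; exact (hFllift x).symm


lemma main_lemma {G B : Type*} [Group G] [TopologicalSpace G] [IsTopologicalGroup G]
    [MeasurableSpace B] [MulAction G B]
    (Λ : Subgroup G) (ρ : Λ →* (Circle' ≃ₜ Circle'))
    (hop : ∀ l : Λ, IsOrientationPreserving (ρ l))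
    (ν : Measure B) [IsProbabilityMeasure ν]
    (hact : ∀ g : G, Measurable fun x : B => g • x)
    (hqi : ∀ g : G, Measure.map (fun x : B => g • x) ν ≪ ν ∧
      ν ≪ Measure.map (fun x : B => g • x) ν)
    (hcont : ∀ E : Set B, MeasurableSet E →
      Continuous fun g : G => ν (symmDiff ((fun x : B => g • x) '' E) E))
    (Φ : B → Measure Circle')
    (hΦprob : ∀ x : B, IsProbabilityMeasure (Φ x))
    (hΦmeas : ∀ s : Set Circle', MeasurableSet s → Measurable fun x : B => Φ x s)
    (hΦequiv : ∀ l : Λ, ∀ᵐ x ∂ν, Φ ((l : G) • x) = Measure.map (ρ l) (Φ x))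
    (hsupp : ∀ U : Set Circle', IsOpen U → U.Nonempty →
      0 < ν {x : B | measSupport (Φ x) ⊆ U})
    {ε : ℝ} (hε : 0 < ε) :
    ∃ W ∈ nhds (1 : G), ∀ μ : Λ, (μ : G) ∈ W → ∀ z : Circle', dist (ρ μ z) z ≤ ε := by
  -- choose m
  obtain ⟨n, hn⟩ := exists_nat_gt (2 / ε)
  set m : ℕ := n + 2 with hmdef
  have hm : 2 ≤ m := by omega
  have hm0 : (0:ℝ) < m := by positivity
  have hεm : 2 / (m:ℝ) ≤ ε := by
    rw [div_le_iff₀ hm0]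
    have h1 : (2:ℝ)/ε < (m:ℝ) := by
      have : (n:ℝ) ≤ (m:ℝ) := by exact_mod_cast Nat.le_add_right n 2
      linarith
    have h2 : (2:ℝ)/ε * ε = 2 := div_mul_cancel₀ 2 hε.ne'
    nlinarith
  set r : ℝ := 1 / (4 * (m:ℝ)) with hrdef
  have hr0 : 0 < r := by positivity
  set c : ℕ → Circle' := fun i => (((i:ℝ) / (m:ℝ) : ℝ) : Circle') with hcdef
  set A : ℕ → Set B := fun i => {x | Φ x ((Metric.ball (c i) r)ᶜ) = 0} with hAdef
  have hAmeas : ∀ i, MeasurableSet (A i) := by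
    intro i
    have : A i = (fun x => Φ x ((Metric.ball (c i) r)ᶜ)) ⁻¹' {0} := rfl
    rw [this]
    exact (hΦmeas _ measurableSet_ball.compl) (measurableSet_singleton 0)
  have hApos : ∀ i, 0 < ν (A i) := by
    intro i
    refine lt_of_lt_of_le (hsupp (Metric.ball (c i) r) Metric.isOpen_ball
      ⟨c i, Metric.mem_ball_self hr0⟩) (measure_mono ?_)
    intro x hx
    exact measure_mono_null (compl_subset_compl.mpr hx) (measure_compl_measSupport (Φ x))
  have hAsupp : ∀ i, ∀ x ∈ A i, measSupport (Φ x) ⊆ Metric.closedBall (c i) r :=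
    fun i x hx => measSupport_subset_closedBall hx
  -- the neighbourhood
  set W : Set G := ⋂ i ∈ Finset.range m,
    {g : G | ν (symmDiff ((fun x : B => g • x) '' A i) (A i)) < ν (A i)} with hWdef
  have hW : W ∈ nhds (1 : G) := by
    rw [hWdef]
    refine (Filter.biInter_finset_mem _).mpr fun i _ => ?_
    have hopen : IsOpen {g : G | ν (symmDiff ((fun x : B => g • x) '' A i) (A i)) < ν (A i)} := by
      have := (hcont (A i) (hAmeas i)).isOpen_preimage (Set.Iio (ν (A i))) isOpen_Iio
      exact this
    refine hopen.mem_nhds ?_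
    have hid : (fun x : B => (1:G) • x) = id := funext fun x => one_smul G x
    simp only [Set.mem_setOf_eq, hid, Set.image_id, symmDiff_self, Set.bot_eq_empty,
      measure_empty]
    exact hApos i
  refine ⟨W, hW, ?_⟩
  intro μ hμW z
  -- the key geometric data
  have hdata : ∀ i, i < m → ∃ w zz : Circle', dist w (c i) ≤ r ∧ dist zz (c i) ≤ r ∧
      (ρ μ) w = zz := by
    intro i hi
    have hν1 : ν (symmDiff ((fun x : B => (μ:G) • x) '' A i) (A i)) < ν (A i) := by
      have := Set.mem_iInter.mp hμW i
      have := Set.mem_iInter.mp this (Finset.mem_range.mpr hi)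
      exact this
    set T : B → B := fun x => (μ:G) • x with hTdef
    have hcap : ν (T '' A i ∩ A i) ≠ 0 := by
      intro h0
      have hsub : A i ⊆ (T '' A i ∩ A i) ∪ symmDiff (T '' A i) (A i) := by
        intro x hx
        by_cases hx2 : x ∈ T '' A i
        · exact Set.mem_union_left _ ⟨hx2, hx⟩
        · exact Set.mem_union_right _ (Set.mem_symmDiff.mpr (Or.inr ⟨hx, hx2⟩))
      have := (measure_mono hsub).trans
        (measure_union_le (μ := ν) (T '' A i ∩ A i) (symmDiff (T '' A i) (A i)))
      rw [h0, zero_add] at this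
      exact absurd (lt_of_le_of_lt this hν1) (lt_irrefl _)
    set bad : Set B := {x | ¬ (Φ ((μ:G) • x) = Measure.map (ρ μ) (Φ x))} with hbaddef
    have hbad : ν bad = 0 := by
      have := hΦequiv μ
      rw [MeasureTheory.ae_iff] at this
      exact this
    set N : Set B := toMeasurable ν bad with hNdef
    have hNmeas : MeasurableSet N := measurableSet_toMeasurable ν bad
    have hNnull : ν N = 0 := by rw [hNdef, measure_toMeasurable]; exact hbad
    have hTN : ν (T '' N) = 0 := by
      have himg : T '' N = (fun x : B => ((μ:G))⁻¹ • x) ⁻¹' N := by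
        ext y
        constructor
        · rintro ⟨x, hx, rfl⟩
          simpa [hTdef, inv_smul_smul] using hx
        · intro hy
          exact ⟨((μ:G))⁻¹ • y, hy, by simp [hTdef, smul_inv_smul]⟩
      rw [himg, ← Measure.map_apply (hact _) hNmeas]
      exact (hqi ((μ:G)⁻¹)).1 hNnull
    have hSne : ν ((T '' A i ∩ A i) \ T '' N) ≠ 0 := by
      intro h0
      have hsub : T '' A i ∩ A i ⊆ ((T '' A i ∩ A i) \ T '' N) ∪ T '' N := by
        intro x hx
        by_cases hx2 : x ∈ T '' N
        · exact Set.mem_union_right _ hx2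
        · exact Set.mem_union_left _ ⟨hx, hx2⟩
      have := (measure_mono hsub).trans
        (measure_union_le (μ := ν) ((T '' A i ∩ A i) \ T '' N) (T '' N))
      rw [h0, zero_add, hTN] at this
      exact hcap (le_antisymm this zero_le)
    obtain ⟨x, hx⟩ := MeasureTheory.nonempty_of_measure_ne_zero hSne
    obtain ⟨⟨⟨x', hx'A, hxx'⟩, hxA⟩, hxN⟩ := hx
    have hx'N : x' ∉ bad := by
      intro hc
      exact hxN ⟨x', subset_toMeasurable ν bad hc, hxx'⟩
    have h1 : Φ ((μ:G) • x') = Measure.map (ρ μ) (Φ x') := not_not.mp (fun hc => hx'N hc)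
    have heq : Φ x = Measure.map (ρ μ) (Φ x') := by
      rw [← hxx']; exact h1
    have hsupp1 : measSupport (Φ x) ⊆ Metric.closedBall (c i) r := hAsupp i x hxA
    have hsupp2 : measSupport (Φ x) ⊆ (ρ μ) '' Metric.closedBall (c i) r := by
      rw [heq]
      exact (measSupport_map (ρ μ) (Φ x')).trans (Set.image_mono (hAsupp i x' hx'A))
    haveI := hΦprob x
    obtain ⟨zz, hzz⟩ := measSupport_nonempty (Φ x)
    obtain ⟨w, hw, hρw⟩ := hsupp2 hzz
    exact ⟨w, zz, Metric.mem_closedBall.mp hw, Metric.mem_closedBall.mp (hsupp1 hzz), hρw⟩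
  -- lift to the line
  obtain ⟨F, hFmono, hFper, hFlift⟩ := hop μ
  have hexists : ∀ i, i < m → ∃ (tt : ℝ) (kk : ℤ),
      |tt - (i:ℝ)/(m:ℝ)| ≤ 1/(4*(m:ℝ)) ∧ |F tt - (i:ℝ)/(m:ℝ) - kk| ≤ 1/(4*(m:ℝ)) := by
    intro i hi
    obtain ⟨w, zz, hw, hz, hρw⟩ := hdata i hi
    obtain ⟨tt, htt, httd⟩ := exists_rep_close w ((i:ℝ)/(m:ℝ))
    obtain ⟨uu, huu, huud⟩ := exists_rep_close zz ((i:ℝ)/(m:ℝ))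
    have hFtt : ((F tt : ℝ) : Circle') = (uu : Circle') := by
      rw [← hFlift tt, htt, hρw, huu]
    obtain ⟨κ, hκ⟩ := circle_eq_iff.mp hFtt
    refine ⟨tt, κ, ?_, ?_⟩
    · rw [httd]; exact hw
    · rw [hκ]
      have : uu + (κ:ℝ) - (i:ℝ)/(m:ℝ) - κ = uu - (i:ℝ)/(m:ℝ) := by ring
      rw [this, huud]
      exact hz
  classical
  set t : ℕ → ℝ := fun i => if h : i < m then (hexists i h).choose else 0 with htdef
  set k : ℕ → ℤ := fun i => if h : i < m then (hexists i h).choose_spec.choose else 0 with hkdef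
  have ht : ∀ i, i < m → |t i - (i:ℝ)/(m:ℝ)| ≤ 1/(4*(m:ℝ)) := by
    intro i hi
    rw [htdef]
    simp only [dif_pos hi]
    exact (hexists i hi).choose_spec.choose_spec.1
  have hk : ∀ i, i < m → |F (t i) - (i:ℝ)/(m:ℝ) - k i| ≤ 1/(4*(m:ℝ)) := by
    intro i hi
    rw [htdef, hkdef]
    simp only [dif_pos hi]
    exact (hexists i hi).choose_spec.choose_spec.2
  obtain ⟨s, rfl⟩ := QuotientAddGroup.mk_surjective z
  obtain ⟨KK, hKK⟩ := comb hFmono hFper hm ht hk s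
  calc dist ((ρ μ) (s : Circle')) ((s : Circle'))
      = dist ((F s : ℝ) : Circle') ((s : Circle')) := by rw [hFlift s]
    _ ≤ |F s - s - KK| := dist_coe_le _ _ _
    _ ≤ 2 / (m:ℝ) := hKK
    _ ≤ ε := hεm


end S13

/-- Extending a minimal strongly proximal action of a dense subgroup `Λ` of a locally compact
second countable group `G`: given a quasi-invariant `G`-space `(B, ν)` with continuous
translation on measurable sets and a `Λ`-equivariant map `Φ : B → Prob(S¹)` whose values are
supported inside every nonempty open set with positive probability, the action `ρ` extends
uniquely to a continuous homomorphism `G → Homeo₊(S¹)`, where `Homeo₊(S¹)` carries the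
topology of uniform convergence of homeomorphisms together with their inverses. -/
theorem statement13 {G B : Type*} [Group G] [TopologicalSpace G] [IsTopologicalGroup G]
    [LocallyCompactSpace G] [SecondCountableTopology G] [T2Space G]
    (Λ : Subgroup G) (hdense : Dense (Λ : Set G))
    (ρ : Λ →* (Circle' ≃ₜ Circle'))
    (hop : ∀ l : Λ, IsOrientationPreserving (ρ l))
    (hmsp : IsMinimalStronglyProximal ρ)
    [MeasurableSpace B] [StandardBorelSpace B] [MulAction G B]
    (ν : Measure B) [IsProbabilityMeasure ν]
    (hact : ∀ g : G, Measurable fun x : B => g • x)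
    (hqi : ∀ g : G, Measure.map (fun x : B => g • x) ν ≪ ν ∧
      ν ≪ Measure.map (fun x : B => g • x) ν)
    (hcont : ∀ E : Set B, MeasurableSet E →
      Continuous fun g : G => ν (symmDiff ((fun x : B => g • x) '' E) E))
    (Φ : B → Measure Circle')
    (hΦprob : ∀ x : B, IsProbabilityMeasure (Φ x))
    (hΦmeas : ∀ s : Set Circle', MeasurableSet s → Measurable fun x : B => Φ x s)
    (hΦequiv : ∀ l : Λ, ∀ᵐ x ∂ν, Φ ((l : G) • x) = Measure.map (ρ l) (Φ x))
    (hsupp : ∀ U : Set Circle', IsOpen U → U.Nonempty →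
      0 < ν {x : B | measSupport (Φ x) ⊆ U}) :
    ∃! ρbar : G →* (Circle' ≃ₜ Circle'),
      (Continuous fun g : G => ((ρbar g : Circle' ≃ₜ Circle') : C(Circle', Circle'))) ∧
      (Continuous fun g : G => (((ρbar g).symm : Circle' ≃ₜ Circle') : C(Circle', Circle'))) ∧
      (∀ g : G, IsOrientationPreserving (ρbar g)) ∧
      (∀ l : Λ, ρbar (l : G) = ρ l) := by
  classical
  have hML : ∀ ε : ℝ, 0 < ε → ∃ W ∈ nhds (1 : G), ∀ μ : Λ, (μ : G) ∈ W →
      ∀ z : Circle', dist (ρ μ z) z ≤ ε := fun ε hε =>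
    S13.main_lemma Λ ρ hop ν hact hqi hcont Φ hΦprob hΦmeas hΦequiv hsupp hε
  -- pairwise closeness
  have hK2 : ∀ ε : ℝ, 0 < ε → ∃ W ∈ nhds (1 : G), ∀ μ η : Λ, ((μ * η⁻¹ : Λ) : G) ∈ W →
      dist ((ρ μ : Circle' ≃ₜ Circle') : C(Circle', Circle'))
        ((ρ η : Circle' ≃ₜ Circle') : C(Circle', Circle')) ≤ ε := by
    intro ε hε
    obtain ⟨W, hW, hWp⟩ := hML ε hε
    refine ⟨W, hW, fun μ η hmem => ?_⟩
    rw [ContinuousMap.dist_le hε.le]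
    intro x
    have hfact : (ρ μ) x = (ρ (μ * η⁻¹)) ((ρ η) x) := by
      have : ρ μ = ρ (μ * η⁻¹) * ρ η := by rw [← map_mul, inv_mul_cancel_right]
      rw [this]
      rfl
    show dist ((ρ μ) x) ((ρ η) x) ≤ ε
    rw [hfact]
    exact hWp (μ * η⁻¹) hmem ((ρ η) x)
  -- approximating sequences
  have hseq : ∀ g : G, ∃ u : ℕ → Λ, Filter.Tendsto (fun n => ((u n : Λ) : G))
      Filter.atTop (nhds g) := by
    intro g
    obtain ⟨u, hu1, hu2⟩ := mem_closure_iff_seq_limit.mp (hdense g)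
    exact ⟨fun n => ⟨u n, hu1 n⟩, hu2⟩
  choose v hv using hseq
  -- Cauchy property
  have hcauchy : ∀ g : G, CauchySeq (fun n =>
      ((ρ (v g n) : Circle' ≃ₜ Circle') : C(Circle', Circle'))) := by
    intro g
    rw [Metric.cauchySeq_iff]
    intro ε hε
    obtain ⟨W, hW, hWp⟩ := hK2 (ε/2) (by linarith)
    have hj : Filter.Tendsto (fun p : ℕ × ℕ => ((v g p.1 : G) * ((v g p.2 : G))⁻¹))
        (Filter.atTop ×ˢ Filter.atTop) (nhds (1:G)) := by
      have h1 : Filter.Tendsto (fun p : ℕ × ℕ => ((v g p.1 : G)))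
          (Filter.atTop ×ˢ Filter.atTop) (nhds g) := (hv g).comp Filter.tendsto_fst
      have h2 : Filter.Tendsto (fun p : ℕ × ℕ => ((v g p.2 : G)))
          (Filter.atTop ×ˢ Filter.atTop) (nhds g) := (hv g).comp Filter.tendsto_snd
      have := h1.mul h2.inv
      rwa [mul_inv_cancel] at this
    have hev : ∀ᶠ p : ℕ × ℕ in Filter.atTop ×ˢ Filter.atTop,
        ((v g p.1 : G) * ((v g p.2 : G))⁻¹) ∈ W :=
      hj.eventually (Filter.eventually_of_mem hW fun x hx => hx)
    rw [Filter.prod_atTop_atTop_eq] at hev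
    obtain ⟨P, hP⟩ := Filter.eventually_atTop.mp hev
    refine ⟨max P.1 P.2, fun a ha b hb => ?_⟩
    have hmem : ((v g a : G) * ((v g b : G))⁻¹) ∈ W := by
      have := hP (a, b) (Prod.le_def.mpr ⟨le_trans (le_max_left _ _) ha,
        le_trans (le_max_right _ _) hb⟩)
      exact this
    have hcoe : ((v g a * (v g b)⁻¹ : Λ) : G) = (v g a : G) * ((v g b : G))⁻¹ := rfl
    have hd := hWp (v g a) (v g b) (by rw [hcoe]; exact hmem)
    exact lt_of_le_of_lt hd (by linarith)
  have hlim : ∀ g : G, ∃ L : C(Circle', Circle'), Filter.Tendsto (fun n =>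
      ((ρ (v g n) : Circle' ≃ₜ Circle') : C(Circle', Circle'))) Filter.atTop (nhds L) :=
    fun g => cauchySeq_tendsto_of_complete (hcauchy g)
  set limC : G → C(Circle', Circle') := fun g => (hlim g).choose with hlimCdef
  have hlimC : ∀ g, Filter.Tendsto (fun n =>
      ((ρ (v g n) : Circle' ≃ₜ Circle') : C(Circle', Circle'))) Filter.atTop (nhds (limC g)) :=
    fun g => (hlim g).choose_spec
  -- independence of the sequence
  have hind : ∀ (g : G) (w : ℕ → Λ), Filter.Tendsto (fun n => ((w n : Λ) : G))
      Filter.atTop (nhds g) → Filter.Tendsto (fun n =>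
      ((ρ (w n) : Circle' ≃ₜ Circle') : C(Circle', Circle'))) Filter.atTop (nhds (limC g)) := by
    intro g w hw
    rw [Metric.tendsto_atTop]
    intro ε hε
    obtain ⟨W, hW, hWp⟩ := hK2 (ε/3) (by linarith)
    have hj : Filter.Tendsto (fun n => ((w n : G) * ((v g n : G))⁻¹)) Filter.atTop
        (nhds (1:G)) := by
      have := hw.mul (hv g).inv
      rwa [mul_inv_cancel] at this
    have hev : ∀ᶠ n in Filter.atTop, ((w n : G) * ((v g n : G))⁻¹) ∈ W :=
      hj.eventually (Filter.eventually_of_mem hW fun x hx => hx)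
    have hev2 : ∀ᶠ n in Filter.atTop, dist
        ((ρ (v g n) : Circle' ≃ₜ Circle') : C(Circle', Circle')) (limC g) < ε/3 := by
      obtain ⟨N, hN⟩ := Metric.tendsto_atTop.mp (hlimC g) (ε/3) (by linarith)
      exact Filter.eventually_atTop.mpr ⟨N, hN⟩
    obtain ⟨N, hN⟩ := Filter.eventually_atTop.mp (hev.and hev2)
    refine ⟨N, fun n hn => ?_⟩
    obtain ⟨h1, h2⟩ := hN n hn
    have hcoe : ((w n * (v g n)⁻¹ : Λ) : G) = (w n : G) * ((v g n : G))⁻¹ := rfl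
    have hd := hWp (w n) (v g n) (by rw [hcoe]; exact h1)
    calc dist ((ρ (w n) : Circle' ≃ₜ Circle') : C(Circle', Circle')) (limC g)
        ≤ dist ((ρ (w n) : Circle' ≃ₜ Circle') : C(Circle', Circle'))
            ((ρ (v g n) : Circle' ≃ₜ Circle') : C(Circle', Circle'))
          + dist ((ρ (v g n) : Circle' ≃ₜ Circle') : C(Circle', Circle')) (limC g) :=
        dist_triangle _ _ _
      _ < ε/3 + ε/3 := by exact add_lt_add_of_le_of_lt hd h2
      _ < ε := by linarith
  -- values on Λ
  have hcoeΛ : ∀ l : Λ, limC (l : G) =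
      ((ρ l : Circle' ≃ₜ Circle') : C(Circle', Circle')) := by
    intro l
    exact tendsto_nhds_unique (hind (l : G) (fun _ => l) tendsto_const_nhds) tendsto_const_nhds
  -- multiplicativity
  have hmul : ∀ g h' : G, limC (g * h') = (limC g).comp (limC h') := by
    intro g h'
    have hwt : Filter.Tendsto (fun n => ((v g n * v h' n : Λ) : G)) Filter.atTop
        (nhds (g * h')) := (hv g).mul (hv h')
    have h1 := hind (g * h') (fun n => v g n * v h' n) hwt
    have h2 : Filter.Tendsto (fun n =>
        (((ρ (v g n) : Circle' ≃ₜ Circle') : C(Circle', Circle'))).comp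
          (((ρ (v h' n) : Circle' ≃ₜ Circle') : C(Circle', Circle')))) Filter.atTop
        (nhds ((limC g).comp (limC h'))) := (hlimC g).compCM (hlimC h')
    have h3 : (fun n => ((ρ (v g n * v h' n) : Circle' ≃ₜ Circle') : C(Circle', Circle')))
        = fun n => (((ρ (v g n) : Circle' ≃ₜ Circle') : C(Circle', Circle'))).comp
          (((ρ (v h' n) : Circle' ≃ₜ Circle') : C(Circle', Circle'))) := by
      funext n
      ext x
      rw [map_mul]
      rfl
    rw [h3] at h1
    exact tendsto_nhds_unique h1 h2
  have hone : limC 1 = ContinuousMap.id Circle' := by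
    have h1 := hcoeΛ 1
    have h2 : ((1:Λ) : G) = (1:G) := rfl
    rw [h2] at h1
    rw [h1, map_one]
    ext x
    rfl
  have hinvl : ∀ g : G, (limC g⁻¹).comp (limC g) = ContinuousMap.id Circle' := by
    intro g
    rw [← hmul, inv_mul_cancel, hone]
  have hinvr : ∀ g : G, (limC g).comp (limC g⁻¹) = ContinuousMap.id Circle' := by
    intro g
    rw [← hmul, mul_inv_cancel, hone]
  -- the homeomorphisms
  set rfun : G → (Circle' ≃ₜ Circle') := fun g =>
    { toFun := limC g
      invFun := limC g⁻¹
      left_inv := fun x => ContinuousMap.congr_fun (hinvl g) x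
      right_inv := fun x => ContinuousMap.congr_fun (hinvr g) x
      continuous_toFun := (limC g).continuous
      continuous_invFun := (limC g⁻¹).continuous } with hrfundef
  have hrfuncoe : ∀ g : G, ((rfun g : Circle' ≃ₜ Circle') : C(Circle', Circle')) = limC g :=
    fun g => by ext x; rfl
  set rbar : G →* (Circle' ≃ₜ Circle') :=
    { toFun := rfun
      map_one' := by
        ext x
        show limC 1 x = x
        rw [hone]
        rfl
      map_mul' := by
        intro a b
        ext x
        show limC (a * b) x = (rfun a * rfun b) x
        rw [hmul]
        rfl } with hrbardef
  have hrbarcoe : ∀ g : G, ((rbar g : Circle' ≃ₜ Circle') : C(Circle', Circle')) = limC g :=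
    fun g => hrfuncoe g
  -- continuity of limC
  have hlimCcont : Continuous limC := by
    rw [continuous_iff_continuousAt]
    intro g₀
    rw [ContinuousAt, Metric.tendsto_nhds]
    intro ε hε
    obtain ⟨W, hW, hWp⟩ := hK2 (ε/2) (by linarith)
    have hV : interior W ∈ nhds (1:G) := interior_mem_nhds.mpr hW
    have hpre : {g : G | g * g₀⁻¹ ∈ interior W} ∈ nhds g₀ := by
      have hcm : ContinuousAt (fun g : G => g * g₀⁻¹) g₀ :=
        (continuous_id.mul continuous_const).continuousAt
      exact hcm.preimage_mem_nhds (by rw [mul_inv_cancel g₀]; exact hV)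
    refine Filter.eventually_of_mem hpre fun g hg => ?_
    have hjj : Filter.Tendsto (fun n => (v g n : G) * ((v g₀ n : G))⁻¹) Filter.atTop
        (nhds (g * g₀⁻¹)) := (hv g).mul (hv g₀).inv
    have hevent : ∀ᶠ n in Filter.atTop, (v g n : G) * ((v g₀ n : G))⁻¹ ∈ interior W :=
      hjj.eventually (Filter.eventually_of_mem (isOpen_interior.mem_nhds hg) fun x hx => hx)
    have hdists : ∀ᶠ n in Filter.atTop, dist
        ((ρ (v g n) : Circle' ≃ₜ Circle') : C(Circle', Circle'))
        ((ρ (v g₀ n) : Circle' ≃ₜ Circle') : C(Circle', Circle')) ≤ ε/2 := by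
      refine hevent.mono fun n hn => ?_
      have hcoe : ((v g n * (v g₀ n)⁻¹ : Λ) : G) = (v g n : G) * ((v g₀ n : G))⁻¹ := rfl
      exact hWp (v g n) (v g₀ n) (by rw [hcoe]; exact interior_subset hn)
    have htend : Filter.Tendsto (fun n => dist
        ((ρ (v g n) : Circle' ≃ₜ Circle') : C(Circle', Circle'))
        ((ρ (v g₀ n) : Circle' ≃ₜ Circle') : C(Circle', Circle'))) Filter.atTop
        (nhds (dist (limC g) (limC g₀))) := (hlimC g).dist (hlimC g₀)
    have hfin : dist (limC g) (limC g₀) ≤ ε/2 := le_of_tendsto htend hdists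
    calc dist (limC g) (limC g₀) ≤ ε/2 := hfin
      _ < ε := by linarith
  -- assemble
  refine ⟨rbar, ⟨?_, ?_, ?_, ?_⟩, ?_⟩
  · -- continuity
    have : (fun g : G => ((rbar g : Circle' ≃ₜ Circle') : C(Circle', Circle')))
        = limC := funext fun g => hrbarcoe g
    rw [this]
    exact hlimCcont
  · -- continuity of inverses
    have : (fun g : G => (((rbar g).symm : Circle' ≃ₜ Circle') : C(Circle', Circle')))
        = fun g : G => limC g⁻¹ := by
      funext g
      ext x
      rfl
    rw [this]
    exact hlimCcont.comp continuous_inv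
  · -- orientation preserving
    intro g
    refine S13.op_limit (fun n => ρ (v g n)) (rbar g) (fun n => hop _) ?_
    rw [hrbarcoe g]
    exact hlimC g
  · -- extends ρ
    intro l
    ext x
    show limC (l : G) x = (ρ l) x
    rw [hcoeΛ l]
    rfl
  · -- uniqueness
    intro ρ2 hρ2
    obtain ⟨hc1, hc2, hop2, hext2⟩ := hρ2
    have hc1' : Continuous (fun g : G =>
        ((rbar g : Circle' ≃ₜ Circle') : C(Circle', Circle'))) := by
      have : (fun g : G => ((rbar g : Circle' ≃ₜ Circle') : C(Circle', Circle')))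
          = limC := funext fun g => hrbarcoe g
      rw [this]
      exact hlimCcont
    have hfun : (fun g : G => ((ρ2 g : Circle' ≃ₜ Circle') : C(Circle', Circle')))
        = fun g : G => ((rbar g : Circle' ≃ₜ Circle') : C(Circle', Circle')) := by
      refine Continuous.ext_on hdense hc1 hc1' ?_
      intro x hx
      show ((ρ2 x : Circle' ≃ₜ Circle') : C(Circle', Circle'))
          = ((rbar x : Circle' ≃ₜ Circle') : C(Circle', Circle'))
      have e1 : ρ2 x = ρ (⟨x, hx⟩ : Λ) := hext2 ⟨x, hx⟩
      have e2 : limC x = ((ρ (⟨x, hx⟩ : Λ) : Circle' ≃ₜ Circle') : C(Circle', Circle')) :=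
        hcoeΛ ⟨x, hx⟩
      rw [e1, hrbarcoe x, e2]
    refine MonoidHom.ext fun g => ?_
    have hcg := congrFun hfun g
    ext x
    exact ContinuousMap.congr_fun hcg x
end
end

section
/- Let Γ ≤ Λ be groups such that Λ commensurates Γ: for every λ ∈ Λ, the subgroup Γ ∩ λ⁻¹Γλ has finite index in Γ. Let ρ : Λ → Homeo₊(S¹) be a homomorphism whose action on the circle is minimal and strongly proximal, and assume every ρ(Γ)-orbit in S¹ is infinite. Then the restricted action ρ|_Γ : Γ → Homeo₊(S¹) is also minimal and strongly proximal. -/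
noncomputable section

open MeasureTheory Set Function
open scoped ENNReal

namespace Stmt14

open Metric

/-! ### Basic circle lemmas -/

lemma coe_int_eq_zero (k : ℤ) : ((k : ℝ) : Circle') = 0 := by
  rw [QuotientAddGroup.eq_zero_iff]
  exact ⟨k, by simp⟩

lemma coe_add_int (t : ℝ) (k : ℤ) : ((t + k : ℝ) : Circle') = (t : Circle') := by
  have : ((t + k : ℝ) : Circle') = (t : Circle') + ((k : ℝ) : Circle') := rfl
  rw [this, coe_int_eq_zero, add_zero]

lemma coe_eq_coe_iff {s t : ℝ} : (s : Circle') = (t : Circle') ↔ ∃ k : ℤ, t = s + k := by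
  constructor
  · intro h
    rw [QuotientAddGroup.eq] at h
    obtain ⟨k, hk⟩ := AddSubgroup.mem_zmultiples_iff.mp h
    exact ⟨k, by simp only [zsmul_eq_mul, mul_one] at hk; linarith⟩
  · rintro ⟨k, rfl⟩
    exact (coe_add_int s k).symm

lemma cdist_le (s t : ℝ) : dist (s : Circle') (t : Circle') ≤ |s - t| := by
  rw [dist_eq_norm]
  have h : ((s : Circle') - t) = ((s - t : ℝ) : Circle') := by norm_cast
  rw [h, UnitAddCircle.norm_eq]
  have := round_le (s - t) 0
  simpa using this

lemma exists_rep_norm (y : Circle') : ∃ t : ℝ, (t : Circle') = y ∧ |t| = ‖y‖ := by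
  induction y using QuotientAddGroup.induction_on with
  | H x =>
    refine ⟨x - round x, ?_, ?_⟩
    · rw [show x - round x = x + (-round x : ℤ) by push_cast; ring, coe_add_int]
    · rw [UnitAddCircle.norm_eq]

lemma exists_rep_dist (y : Circle') (c : ℝ) :
    ∃ t : ℝ, (t : Circle') = y ∧ |t - c| = dist y (c : Circle') := by
  obtain ⟨u, hu, hnu⟩ := exists_rep_norm (y - (c : Circle'))
  refine ⟨c + u, ?_, ?_⟩
  · have : ((c + u : ℝ) : Circle') = (c : Circle') + (u : Circle') := rfl
    rw [this, hu]; abel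
  · rw [dist_eq_norm, ← hnu]; ring_nf

/-- The (closed) arc from `a` to `b`, given by real parameters. -/
def Arc (a b : ℝ) : Set Circle' := (fun t : ℝ => (t : Circle')) '' Icc a b

lemma mem_arc {a b t : ℝ} (h1 : a ≤ t) (h2 : t ≤ b) : (t : Circle') ∈ Arc a b :=
  ⟨t, ⟨h1, h2⟩, rfl⟩

lemma arc_mono {a b c d : ℝ} (h1 : a ≤ c) (h2 : d ≤ b) : Arc c d ⊆ Arc a b :=
  Set.image_mono (Icc_subset_Icc h1 h2)

lemma arc_nonempty {a b : ℝ} (h : a ≤ b) : (Arc a b).Nonempty :=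
  ⟨(a : Circle'), mem_arc le_rfl h⟩

lemma arc_shift (a b : ℝ) (k : ℤ) : Arc (a + k) (b + k) = Arc a b := by
  unfold Arc
  rw [show Icc (a + (k:ℝ)) (b + k) = (fun t : ℝ => t + (k:ℝ)) '' Icc a b from
    (Set.image_add_const_Icc _ _ _).symm, Set.image_image]
  exact Set.EqOn.image_eq (fun t _ => coe_add_int t k) ▸ rfl

lemma isClosed_arc (a b : ℝ) : IsClosed (Arc a b) :=
  (isCompact_Icc.image (AddCircle.continuous_mk' 1)).isClosed

lemma diam_arc_le {a b : ℝ} (h : a ≤ b) : diam (Arc a b) ≤ b - a := by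
  apply diam_le_of_forall_dist_le (by linarith)
  rintro x ⟨s, hs, rfl⟩ y ⟨t, ht, rfl⟩
  refine (cdist_le s t).trans ?_
  rw [abs_sub_le_iff]
  constructor <;> [linarith [hs.1, hs.2, ht.1, ht.2]; linarith [hs.1, hs.2, ht.1, ht.2]]

lemma closedBall_subset_arc {c r : ℝ} :
    closedBall ((c : ℝ) : Circle') r ⊆ Arc (c - r) (c + r) := by
  intro y hy
  obtain ⟨t, ht, hd⟩ := exists_rep_dist y c
  rw [mem_closedBall] at hy
  have : |t - c| ≤ r := by rw [hd]; exact hy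
  rw [abs_le] at this
  exact ht ▸ mem_arc (by linarith [this.1]) (by linarith [this.2])

lemma dist_coe_half (a : ℝ) : dist ((a : ℝ) : Circle') ((a + 1/2 : ℝ) : Circle') = 1/2 := by
  rw [dist_eq_norm]
  have h : ((a : Circle') - ((a + 1/2 : ℝ) : Circle')) = ((-(1/2) : ℝ) : Circle') := by
    have : (a : ℝ) - (a + 1/2) = -(1/2) := by ring
    exact this ▸ rfl
  rw [h, UnitAddCircle.norm_eq]
  norm_num [round_eq]

lemma isBounded_circle (S : Set Circle') : Bornology.IsBounded S := isBounded_of_compactSpace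

lemma diam_arc_ge_half {a b : ℝ} (h : a + 1/2 ≤ b) : (1/2 : ℝ) ≤ diam (Arc a b) := by
  have h1 : ((a : ℝ) : Circle') ∈ Arc a b := mem_arc le_rfl (by linarith)
  have h2 : ((a + 1/2 : ℝ) : Circle') ∈ Arc a b := mem_arc (by linarith) h
  calc (1/2 : ℝ) = dist ((a : ℝ) : Circle') ((a + 1/2 : ℝ) : Circle') := (dist_coe_half a).symm
    _ ≤ diam (Arc a b) := dist_le_diam_of_mem (isBounded_circle _) h1 h2

lemma half_not_mem_arc : ((1/2 : ℝ) : Circle') ∉ Arc (-(1/8)) (1/8) := by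
  rintro ⟨s, hs, hcoe⟩
  obtain ⟨k, hk⟩ := coe_eq_coe_iff.mp hcoe
  have h1 : -(1/8 : ℝ) ≤ s := hs.1
  have h2 : s ≤ (1/8 : ℝ) := hs.2
  have hk' : (k : ℝ) = 1/2 - s := by linarith
  rcases eq_or_ne k 0 with rfl | hne
  · simp only [Int.cast_zero] at hk'; linarith
  · have h3 : (1:ℤ) ≤ |k| := Int.one_le_abs hne
    have h4 : (1 : ℝ) ≤ |(k : ℝ)| := by exact_mod_cast h3
    have h5 : |(k : ℝ)| ≤ 5/8 := by rw [hk', abs_le]; constructor <;> linarith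
    linarith

lemma arc_ne_univ : Arc (-(1/8)) (1/8) ≠ (univ : Set Circle') := by
  intro h
  exact half_not_mem_arc (h ▸ mem_univ _)


/-! ### Lifts -/

/-- `F` is an increasing degree-one lift of the circle homeomorphism `h`. -/
def IsLift (h : Circle' ≃ₜ Circle') (F : ℝ ≃ₜ ℝ) : Prop :=
  StrictMono F ∧ (∀ x : ℝ, F (x + 1) = F x + 1) ∧
    ∀ x : ℝ, h (x : Circle') = ((F x : ℝ) : Circle')

namespace IsLift
variable {h : Circle' ≃ₜ Circle'} {F : ℝ ≃ₜ ℝ}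

lemma mono (hF : IsLift h F) : Monotone F := hF.1.monotone

lemma add_one (hF : IsLift h F) (x : ℝ) : F (x + 1) = F x + 1 := hF.2.1 x

lemma sub_one (hF : IsLift h F) (x : ℝ) : F (x - 1) = F x - 1 := by
  have := hF.add_one (x - 1); rw [sub_add_cancel] at this; linarith

lemma add_int (hF : IsLift h F) (x : ℝ) (k : ℤ) : F (x + k) = F x + k := by
  induction k using Int.induction_on with
  | zero => simp
  | succ n ih =>
      have h1 : (x + ((n:ℤ) + 1 : ℤ) : ℝ) = (x + (n:ℤ)) + 1 := by push_cast; ring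
      rw [h1, hF.add_one, ih]; push_cast; ring
  | pred n ih =>
      have h1 : (x + ((-(n:ℤ)) - 1 : ℤ) : ℝ) = (x + (-(n:ℤ) : ℤ)) - 1 := by push_cast; ring
      rw [h1, hF.sub_one, ih]; push_cast; ring

lemma semiconj (hF : IsLift h F) (x : ℝ) : h (x : Circle') = ((F x : ℝ) : Circle') := hF.2.2 x

/-- The inverse homeomorphism is lifted by the inverse lift. -/
lemma symm (hF : IsLift h F) : IsLift h.symm F.symm := by
  have hFs : StrictMono (F.symm : ℝ → ℝ) := by
    intro a b hab
    rcases lt_trichotomy (F.symm a) (F.symm b) with hlt | heq | hgt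
    · exact hlt
    · exact absurd (by rw [← F.apply_symm_apply a, ← F.apply_symm_apply b, heq]) hab.ne
    · exact absurd (by
        calc b = F (F.symm b) := (F.apply_symm_apply b).symm
          _ < F (F.symm a) := hF.1 hgt
          _ = a := F.apply_symm_apply a) (not_lt.mpr hab.le)
  refine ⟨hFs, fun x => ?_, fun x => ?_⟩
  · apply F.injective
    rw [F.apply_symm_apply, hF.add_one, F.apply_symm_apply]
  · apply h.injective
    rw [h.apply_symm_apply, hF.semiconj, F.apply_symm_apply]

lemma image_arc (hF : IsLift h F) (a b : ℝ) : h '' Arc a b = Arc (F a) (F b) := by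
  unfold Arc
  rw [← Set.image_comp]
  have h1 : (h ∘ fun t : ℝ => (t : Circle')) = (fun t : ℝ => (t : Circle')) ∘ F := by
    funext t; exact hF.semiconj t
  rw [h1, Set.image_comp]
  have e := (hF.1.orderIsoOfSurjective F F.surjective).image_Icc a b
  rw [StrictMono.coe_orderIsoOfSurjective] at e
  rw [e]

end IsLift


/-! ### Group lemmas -/

variable {Λ : Type*} [Group Λ]

/-- conjugate subgroup l•H•l⁻¹ -/
def cmap (l : Λ) (H : Subgroup Λ) : Subgroup Λ := Subgroup.map (MulAut.conj l).toMonoidHom H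

lemma mem_cmap {l x : Λ} {H : Subgroup Λ} : x ∈ cmap l H ↔ ∃ g ∈ H, l * g * l⁻¹ = x := by
  simp [cmap, Subgroup.mem_map, MulAut.conj_apply]

lemma relIndex_cmap (l : Λ) (A B : Subgroup Λ) :
    (cmap l A).relIndex (cmap l B) = A.relIndex B := by
  have h := Subgroup.relIndex_comap (H := cmap l A) (MulAut.conj l).toMonoidHom B
  rw [show Subgroup.comap (MulAut.conj l).toMonoidHom (cmap l A) = A from
    Subgroup.comap_map_eq_self_of_injective (MulAut.conj l).injective A] at h
  exact h.symm

section WithGamma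
variable (Γ : Subgroup Λ) (ρ : Λ →* (Circle' ≃ₜ Circle'))

/-- finite-index-in-Γ subgroups -/
def FI (Δ : Subgroup Λ) : Prop := Δ ≤ Γ ∧ Δ.relIndex Γ ≠ 0

variable {Γ}

lemma hc' (hcomm : ∀ l : Λ, (Subgroup.map (MulAut.conj l⁻¹).toMonoidHom Γ).relIndex Γ ≠ 0)
    (l : Λ) : (cmap l Γ).relIndex Γ ≠ 0 := by
  have := hcomm l⁻¹
  rwa [inv_inv] at this

lemma FI_self : FI Γ Γ := ⟨le_rfl, by rw [Subgroup.relIndex_self]; exact one_ne_zero⟩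

lemma FI_inf_cmap (hcomm : ∀ l : Λ, (Subgroup.map (MulAut.conj l⁻¹).toMonoidHom Γ).relIndex Γ ≠ 0)
    (l : Λ) {Δ : Subgroup Λ} (hΔ : FI Γ Δ) : FI Γ (Γ ⊓ cmap l Δ) := by
  refine ⟨inf_le_left, ?_⟩
  rw [inf_comm, Subgroup.inf_relIndex_right]
  have h1 : (cmap l Δ).relIndex (cmap l Γ) ≠ 0 := by rw [relIndex_cmap]; exact hΔ.2
  exact Subgroup.relIndex_ne_zero_trans h1 (hc' hcomm l)

variable {ρ}

lemma image_mul (a b : Λ) (S : Set Circle') : ρ (a * b) '' S = ρ a '' (ρ b '' S) := by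
  rw [show ((ρ (a*b) : Circle' ≃ₜ Circle') : Circle' → Circle')
      = (ρ a : Circle' → Circle') ∘ (ρ b : Circle' → Circle') from
    funext fun x => by rw [map_mul]; rfl]
  exact Set.image_comp _ _ S

lemma image_one (S : Set Circle') : ρ (1 : Λ) '' S = S := by
  rw [show ((ρ (1:Λ) : Circle' ≃ₜ Circle') : Circle' → Circle') = id from
    funext fun x => by rw [map_one]; rfl]
  exact Set.image_id S

lemma fixed_point_absurd
    (horb : ∀ p : Circle', (Set.range fun γ : Γ => ρ (γ : Λ) p).Infinite)
    {Δ : Subgroup Λ} (hΔ : FI Γ Δ) (q : Circle')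
    (hfix : ∀ d ∈ Δ, ρ d q = q) : False := by
  set H := Δ.subgroupOf Γ with hH
  have hidx : H.index ≠ 0 := hΔ.2
  have hfin : Finite (Γ ⧸ H) := by
    rw [Subgroup.index] at hidx
    exact (Nat.card_ne_zero.mp hidx).2
  have hsub : (Set.range fun γ : Γ => ρ (γ : Λ) q)
      ⊆ Set.range fun c : Γ ⧸ H => ρ ((Quotient.out c : Γ) : Λ) q := by
    rintro _ ⟨γ, rfl⟩
    refine ⟨QuotientGroup.mk γ, ?_⟩
    set c : Γ ⧸ H := QuotientGroup.mk γ
    have hout : (QuotientGroup.mk (Quotient.out c) : Γ ⧸ H) = c := QuotientGroup.out_eq' c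
    have hmem : (Quotient.out c)⁻¹ * γ ∈ H := QuotientGroup.eq.mp hout
    have hmem' : (((Quotient.out c)⁻¹ * γ : Γ) : Λ) ∈ Δ := hmem
    have : γ = Quotient.out c * ((Quotient.out c)⁻¹ * γ) := by group
    have hmem'' : ((Quotient.out c : Γ) : Λ)⁻¹ * (γ : Λ) ∈ Δ := by
      have := hmem'; push_cast at this; exact this
    rw [this]
    push_cast
    rw [map_mul, homeo_mul_apply, hfix _ hmem'']
  exact (horb q) ((Set.finite_range _).subset hsub) |>.elim

end WithGamma


/-! ### Contractibility -/

section Contr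
variable {Λ : Type*} [Group Λ] (Γ : Subgroup Λ) (ρ : Λ →* (Circle' ≃ₜ Circle'))

/-- `S` can be contracted to arbitrarily small diameter by elements of `Γ`. -/
def Contr (S : Set Circle') : Prop := ∀ ε > (0:ℝ), ∃ l ∈ Γ, diam (ρ l '' S) < ε

variable {Γ ρ}

lemma Contr.mono {S T : Set Circle'} (hST : S ⊆ T) (hT : Contr Γ ρ T) : Contr Γ ρ S := by
  intro ε hε
  obtain ⟨l, hl, hd⟩ := hT ε hε
  exact ⟨l, hl, lt_of_le_of_lt (diam_mono (Set.image_mono hST) (isBounded_circle _)) hd⟩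

/-- uniform continuity of a circle homeomorphism, diameter form -/
lemma uc (f : Circle' ≃ₜ Circle') {ε : ℝ} (hε : 0 < ε) :
    ∃ δ > (0:ℝ), ∀ S : Set Circle', diam S < δ → diam ((f : Circle' → Circle') '' S) < ε := by
  have huc : UniformContinuous (f : Circle' → Circle') :=
    CompactSpace.uniformContinuous_of_continuous f.continuous
  obtain ⟨δ, hδ, hm⟩ := Metric.uniformContinuous_iff.mp huc (ε/2) (by linarith)
  refine ⟨δ, hδ, fun S hS => ?_⟩
  have : diam ((f : Circle' → Circle') '' S) ≤ ε/2 := by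
    apply diam_le_of_forall_dist_le (by linarith)
    rintro _ ⟨x, hx, rfl⟩ _ ⟨y, hy, rfl⟩
    exact le_of_lt (hm (lt_of_le_of_lt (dist_le_diam_of_mem (isBounded_circle _) hx hy) hS))
  linarith

/-- a `Γ`-contractible set can be contracted by any finite-index subgroup. -/
lemma Contr.fi {S : Set Circle'} (hS : Contr Γ ρ S) {Δ : Subgroup Λ} (hΔ : FI Γ Δ) :
    ∀ ε > (0:ℝ), ∃ d ∈ Δ, diam (ρ d '' S) < ε := by
  intro ε hε
  set H := Δ.subgroupOf Γ with hHdef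
  have hfin : Finite (Γ ⧸ H) := by
    have hidx : H.index ≠ 0 := hΔ.2
    rw [Subgroup.index] at hidx
    exact (Nat.card_ne_zero.mp hidx).2
  haveI := Fintype.ofFinite (Γ ⧸ H)
  have hmod : ∀ c : Γ ⧸ H, ∃ δc > (0:ℝ), ∀ T : Set Circle',
      diam T < δc → diam (ρ (((Quotient.out c : Γ) : Λ)⁻¹) '' T) < ε := fun c =>
    uc (ρ (((Quotient.out c : Γ) : Λ)⁻¹)) hε
  choose δf hδf hδprop using hmod
  have hne : (Finset.univ : Finset (Γ ⧸ H)).Nonempty := ⟨QuotientGroup.mk 1, Finset.mem_univ _⟩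
  set δ0 := Finset.univ.inf' hne δf with hδ0def
  have hδ0pos : 0 < δ0 := by
    rw [hδ0def, Finset.lt_inf'_iff]
    exact fun c _ => hδf c
  obtain ⟨l, hlΓ, hld⟩ := hS δ0 hδ0pos
  set γ : Γ := ⟨l, hlΓ⟩ with hγdef
  set c : Γ ⧸ H := QuotientGroup.mk γ with hcdef
  have hout : (QuotientGroup.mk (Quotient.out c) : Γ ⧸ H) = c := QuotientGroup.out_eq' c
  have hmem : (Quotient.out c)⁻¹ * γ ∈ H := QuotientGroup.eq.mp hout
  have hmemΔ : (((Quotient.out c)⁻¹ * γ : Γ) : Λ) ∈ Δ := hmem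
  refine ⟨_, hmemΔ, ?_⟩
  have hco : (((Quotient.out c)⁻¹ * γ : Γ) : Λ) = ((Quotient.out c : Γ) : Λ)⁻¹ * l := by
    push_cast; rfl
  rw [hco, image_mul]
  exact hδprop c _ (lt_of_lt_of_le hld (Finset.inf'_le _ (Finset.mem_univ c)))

/-- contractibility is invariant under the ambient commensurating group. -/
lemma Contr.image (hcomm : ∀ l : Λ, (Subgroup.map (MulAut.conj l⁻¹).toMonoidHom Γ).relIndex Γ ≠ 0)
    {S : Set Circle'} (hS : Contr Γ ρ S) (l : Λ) : Contr Γ ρ (ρ l '' S) := by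
  intro ε hε
  obtain ⟨δ1, hδ1, hδprop⟩ := uc (ρ l) hε
  have hΔ : FI Γ (Γ ⊓ cmap l⁻¹ Γ) := FI_inf_cmap hcomm l⁻¹ FI_self
  obtain ⟨d, hd, hdd⟩ := hS.fi hΔ δ1 hδ1
  obtain ⟨hdΓ, hdc⟩ := Subgroup.mem_inf.mp hd
  obtain ⟨g, hgΓ, hgeq⟩ := mem_cmap.mp hdc
  refine ⟨g, hgΓ, ?_⟩
  have hgl : g * l = l * d := by
    have : d = l⁻¹ * g * l⁻¹⁻¹ := hgeq.symm
    rw [this]; group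
  rw [← image_mul, hgl, image_mul]
  exact hδprop _ hdd

end Contr

/-! ### The good case -/

section Good
variable {Λ : Type*} [Group Λ] {Γ : Subgroup Λ} {ρ : Λ →* (Circle' ≃ₜ Circle')}

lemma contr_of_good
    (hcomm : ∀ l : Λ, (Subgroup.map (MulAut.conj l⁻¹).toMonoidHom Γ).relIndex Γ ≠ 0)
    (hmsp : IsMinimalStronglyProximal ρ)
    (hgood : ∃ (c : Circle') (r : ℝ), 0 < r ∧ Contr Γ ρ (closedBall c r))
    {K : Set Circle'} (hK : IsClosed K) (hKu : K ≠ univ) : Contr Γ ρ K := by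
  obtain ⟨c, r, hr, hball⟩ := hgood
  obtain ⟨l, hl⟩ := hmsp K hK hKu (ball c r) isOpen_ball (nonempty_ball.mpr hr)
  have h1 : Contr Γ ρ (ρ l '' K) :=
    Contr.mono (hl.trans ball_subset_closedBall) hball
  have h2 := h1.image hcomm l⁻¹
  rwa [← image_mul, inv_mul_cancel, image_one] at h2

/-- a uniform "mover": sets of small diameter can be displaced off themselves by `Γ`. -/
lemma mover (horb : ∀ p : Circle', (Set.range fun γ : Γ => ρ (γ : Λ) p).Infinite) :
    ∃ e > (0:ℝ), ∀ q : Circle', ∃ g ∈ Γ, ∀ x ∈ closedBall q e, ρ g x ∉ closedBall q e := by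
  -- for each z pick a group element moving z
  have hmov : ∀ z : Circle', ∃ g ∈ Γ, ρ g z ≠ z := by
    intro z
    by_contra hcon
    push_neg at hcon
    have : (Set.range fun γ : Γ => ρ (γ : Λ) z) ⊆ {z} := by
      rintro _ ⟨γ, rfl⟩
      exact hcon _ γ.2
    exact (horb z) ((Set.finite_singleton z).subset this) |>.elim
  choose g hgΓ hgz using hmov
  -- displacement and continuity radius
  have hs : ∀ z : Circle', 0 < dist (ρ (g z) z) z / 4 := fun z => by
    have := dist_pos.mpr (hgz z); linarith
  have hcont : ∀ z : Circle', ∃ η > (0:ℝ), η ≤ dist (ρ (g z) z) z / 4 ∧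
      ∀ x, dist x z < η → dist (ρ (g z) x) (ρ (g z) z) < dist (ρ (g z) z) z / 4 := by
    intro z
    have hc : ContinuousAt (ρ (g z) : Circle' → Circle') z := (ρ (g z)).continuous.continuousAt
    rw [Metric.continuousAt_iff] at hc
    obtain ⟨δ, hδ, hprop⟩ := hc _ (hs z)
    exact ⟨min δ (dist (ρ (g z) z) z / 4), lt_min hδ (hs z), min_le_right _ _,
      fun x hx => hprop (lt_of_lt_of_le hx (min_le_left _ _))⟩
  choose η hη hηs hηprop using hcont
  -- finite subcover
  have hcov : (univ : Set Circle') ⊆ ⋃ z : Circle', ball z (η z / 2) := by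
    intro x _
    exact mem_iUnion.mpr ⟨x, mem_ball_self (by linarith [hη x])⟩
  obtain ⟨t, ht⟩ := isCompact_univ.elim_finite_subcover _ (fun z => isOpen_ball) hcov
  have htne : t.Nonempty := by
    by_contra hemp
    rw [Finset.not_nonempty_iff_eq_empty] at hemp
    have := ht (mem_univ ((0:ℝ) : Circle'))
    simp [hemp] at this
  set e := t.inf' htne (fun z => η z / 4) with he
  have hepos : 0 < e := by
    rw [he, Finset.lt_inf'_iff]
    exact fun z _ => by linarith [hη z]
  refine ⟨e, hepos, fun q => ?_⟩
  obtain ⟨z, hzt, hqz⟩ := by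
    have := ht (mem_univ q)
    simpa only [mem_iUnion, exists_prop] using this
  have hez : e ≤ η z / 4 := Finset.inf'_le _ hzt
  refine ⟨g z, hgΓ z, fun x hx hximg => ?_⟩
  -- x is within η z of z
  have hxz : dist x z < η z := by
    have h1 : dist x q ≤ e := mem_closedBall.mp hx
    have h2 : dist q z < η z / 2 := mem_ball.mp hqz
    calc dist x z ≤ dist x q + dist q z := dist_triangle _ _ _
      _ < e + η z / 2 := by linarith
      _ ≤ η z := by linarith
  have himg : dist (ρ (g z) x) (ρ (g z) z) < dist (ρ (g z) z) z / 4 := hηprop z x hxz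
  -- but also ρ (g z) x is close to z
  have h3 : dist (ρ (g z) x) z < η z := by
    have h1 : dist (ρ (g z) x) q ≤ e := mem_closedBall.mp hximg
    have h2 : dist q z < η z / 2 := mem_ball.mp hqz
    calc dist (ρ (g z) x) z ≤ dist (ρ (g z) x) q + dist q z := dist_triangle _ _ _
      _ < e + η z / 2 := by linarith
      _ ≤ η z := by linarith
  have : dist (ρ (g z) z) z ≤ dist (ρ (g z) z) (ρ (g z) x) + dist (ρ (g z) x) z :=
    dist_triangle _ _ _
  rw [dist_comm (ρ (g z) z) (ρ (g z) x)] at this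
  have hfin : dist (ρ (g z) z) z < dist (ρ (g z) z) z / 4 + η z := by linarith
  have : η z ≤ dist (ρ (g z) z) z / 4 := hηs z
  linarith

end Good

section MainGood
variable {Λ : Type*} [Group Λ] {Γ : Subgroup Λ} {ρ : Λ →* (Circle' ≃ₜ Circle')}

lemma main_good
    (hcomm : ∀ l : Λ, (Subgroup.map (MulAut.conj l⁻¹).toMonoidHom Γ).relIndex Γ ≠ 0)
    (hmsp : IsMinimalStronglyProximal ρ)
    (horb : ∀ p : Circle', (Set.range fun γ : Γ => ρ (γ : Λ) p).Infinite)
    (hgood : ∃ (c : Circle') (r : ℝ), 0 < r ∧ Contr Γ ρ (closedBall c r)) :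
    IsMinimalStronglyProximal (ρ.comp Γ.subtype) := by
  intro K hK hKu U hU hUne
  -- trivial case : K empty
  rcases K.eq_empty_or_nonempty with rfl | hKne
  · exact ⟨1, by simp⟩
  obtain ⟨u, huU⟩ := hUne
  obtain ⟨ru, hru, hball⟩ := Metric.isOpen_iff.mp hU u huU
  by_cases hC : (ball u ru)ᶜ = (∅ : Set Circle')
  · -- the ball is everything
    refine ⟨1, ?_⟩
    have : (ball u ru) = univ := by
      rw [← compl_compl (ball u ru), hC, compl_empty]
    intro x _
    exact hball (this ▸ mem_univ x)
  -- C is a proper nonempty closed set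
  set C := (ball u ru)ᶜ with hCdef
  have hCcl : IsClosed C := isOpen_ball.isClosed_compl
  have hCne : C.Nonempty := nonempty_iff_ne_empty.mpr hC
  have hCu : C ≠ univ := by
    intro h
    have : u ∈ C := h ▸ mem_univ u
    exact this (mem_ball_self hru)
  obtain ⟨e, hepos, hmove⟩ := mover horb
  -- contract C
  obtain ⟨g', hg'Γ, hg'd⟩ := contr_of_good hcomm hmsp hgood hCcl hCu (e/4) (by linarith)
  set D := ρ g' '' C with hDdef
  have hDne : D.Nonempty := hCne.image _
  obtain ⟨q, hqD⟩ := hDne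
  have hDq : D ⊆ closedBall q (e/4) := fun z hz =>
    mem_closedBall.mpr (le_of_lt (lt_of_le_of_lt
      (dist_le_diam_of_mem (isBounded_circle _) hz hqD) hg'd))
  -- contract K
  obtain ⟨γ1, hγ1Γ, hγ1d⟩ := contr_of_good hcomm hmsp hgood hK hKu (e/4) (by linarith)
  have hPne : (ρ γ1 '' K).Nonempty := hKne.image _
  obtain ⟨p, hpP⟩ := hPne
  have hPp : ρ γ1 '' K ⊆ closedBall p (e/4) := fun z hz =>
    mem_closedBall.mpr (le_of_lt (lt_of_le_of_lt
      (dist_le_diam_of_mem (isBounded_circle _) hz hpP) hγ1d))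
  -- find γ'' with (ρ γ'') '' K disjoint from D
  have hstep : ∃ γ'' ∈ Γ, ∀ z ∈ ρ γ'' '' K, z ∉ D := by
    by_cases hpq : dist p q ≤ e/2
    · -- move P off with the mover at q
      obtain ⟨g, hgΓ, hg⟩ := hmove q
      refine ⟨g * γ1, Γ.mul_mem hgΓ hγ1Γ, ?_⟩
      rintro z hz hzD
      rw [image_mul] at hz
      obtain ⟨w, hwP, rfl⟩ := hz
      have hwq : w ∈ closedBall q e := by
        have h1 : dist w p ≤ e/4 := mem_closedBall.mp (hPp hwP)
        have h2 : dist w q ≤ dist w p + dist p q := dist_triangle _ _ _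
        exact mem_closedBall.mpr (by linarith)
      exact hg w hwq (closedBall_subset_closedBall (by linarith) (hDq hzD))
    · -- already disjoint
      push_neg at hpq
      refine ⟨γ1, hγ1Γ, fun z hz hzD => ?_⟩
      have h1 : dist z p ≤ e/4 := mem_closedBall.mp (hPp hz)
      have h2 : dist z q ≤ e/4 := mem_closedBall.mp (hDq hzD)
      have : dist p q ≤ dist p z + dist z q := dist_triangle _ _ _
      rw [dist_comm p z] at this
      linarith
  obtain ⟨γ'', hγ''Γ, hdisj⟩ := hstep
  refine ⟨⟨g'⁻¹ * γ'', Γ.mul_mem (Γ.inv_mem hg'Γ) hγ''Γ⟩, ?_⟩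
  have hgoal : ρ (g'⁻¹ * γ'') '' K ⊆ U := by
    rw [image_mul]
    have hsub : ρ γ'' '' K ⊆ ρ g' '' (ball u ru) := by
      intro z hz
      have hzD : z ∉ D := hdisj z hz
      have : z ∈ (ρ g' '' C)ᶜ := hzD
      rw [← Set.image_compl_eq (ρ g').bijective] at this
      simpa [hCdef] using this
    refine (Set.image_mono hsub).trans ?_
    rw [← image_mul, inv_mul_cancel, image_one]
    exact hball.trans (subset_refl U) |>.trans (le_refl U) |>.trans (subset_refl U) |> fun h => h
  · intro z hz
    apply hgoal
    simpa using hz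

end MainGood

/-! ### The bad case : no contractible ball -/

section Bad
variable {Λ : Type*} [Group Λ] {Γ : Subgroup Λ} {ρ : Λ →* (Circle' ≃ₜ Circle')}

/-- grid lemma: every point of the circle is within `1/n` of a grid point `j/n`. -/
lemma grid (n : ℕ) (hn : 0 < n) (y : Circle') :
    ∃ j : ℕ, j < n ∧ dist y (((j : ℝ)/(n : ℝ) : ℝ) : Circle') ≤ 1/(n : ℝ) := by
  induction y using QuotientAddGroup.induction_on with
  | H x =>
    set t := Int.fract x with htdef
    have ht0 : 0 ≤ t := Int.fract_nonneg x
    have ht1 : t < 1 := Int.fract_lt_one x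
    have hxt : ((x : ℝ) : Circle') = ((t : ℝ) : Circle') := by
      rw [htdef, Int.fract]
      have : x - ↑⌊x⌋ = x + (-⌊x⌋ : ℤ) := by push_cast; ring
      rw [this, coe_add_int]
    set j := ⌊t * n⌋₊ with hjdef
    have hj1 : (j : ℝ) ≤ t * n := Nat.floor_le (by positivity)
    have hj2 : t * n < j + 1 := Nat.lt_floor_add_one _
    have hjn : j < n := by
      have : t * n < n := by
        have := mul_lt_of_lt_one_left (by exact_mod_cast hn : (0:ℝ) < n) ht1
        linarith [this]
      exact_mod_cast Nat.floor_lt (by positivity) |>.mpr (by exact_mod_cast this)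
    refine ⟨j, hjn, ?_⟩
    rw [hxt]
    refine (cdist_le t _).trans ?_
    have hnpos : (0:ℝ) < n := by exact_mod_cast hn
    have hA : (j:ℝ)/n ≤ t := by rw [div_le_iff₀ hnpos]; exact hj1
    have hB : t - (j:ℝ)/n ≤ 1/n := by
      have : t < ((j:ℝ) + 1)/n := by rw [lt_div_iff₀ hnpos]; linarith
      have h2 : ((j:ℝ) + 1)/n = (j:ℝ)/n + 1/n := by ring
      linarith [h2 ▸ this]
    rw [abs_le]
    constructor <;> [linarith; linarith]

/-- In the bad case, `Γ` is (uniformly) equicontinuous. -/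
lemma equi (hop : ∀ l : Λ, IsOrientationPreserving (ρ l))
    (hbad : ∀ (c : Circle') (r : ℝ), 0 < r → ¬ Contr Γ ρ (closedBall c r)) :
    ∀ ε > (0:ℝ), ∃ δ > (0:ℝ), ∀ l ∈ Γ, ∀ S : Set Circle', diam S < δ → diam (ρ l '' S) < ε := by
  intro ε hε
  by_contra hcon
  push_neg at hcon
  -- extract pairs with lifted normal form
  have hpairs : ∀ δ > (0:ℝ), ∃ l ∈ Γ, ∃ s e : ℝ, 0 ≤ e ∧ e < δ ∧
      dist (ρ l ((s:ℝ) : Circle')) (ρ l ((s + e : ℝ) : Circle')) > ε/2 := by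
    intro δ hδ
    obtain ⟨l, hlΓ, S, hSd, hSi⟩ := hcon δ hδ
    -- find a pair in S with far images
    have hpair : ∃ x ∈ S, ∃ y ∈ S, dist (ρ l x) (ρ l y) > ε/2 := by
      by_contra hnp
      push_neg at hnp
      have : diam (ρ l '' S) ≤ ε/2 := by
        apply diam_le_of_forall_dist_le (by linarith)
        rintro _ ⟨x, hx, rfl⟩ _ ⟨y, hy, rfl⟩
        exact hnp x hx y hy
      linarith
    obtain ⟨x, hx, y, hy, hfar⟩ := hpair
    obtain ⟨xr, hxr⟩ := Quotient.exists_rep x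
    have hxr' : ((xr : ℝ) : Circle') = x := hxr
    obtain ⟨t, htr, htd⟩ := exists_rep_dist y xr
    have hdxy : dist x y ≤ diam S := dist_le_diam_of_mem (isBounded_circle _) hx hy
    have hde : |t - xr| < δ := by
      rw [htd, hxr', dist_comm]
      exact lt_of_le_of_lt hdxy hSd
    rcases le_or_gt xr t with hle | hlt
    · refine ⟨l, hlΓ, xr, t - xr, by linarith, by rwa [abs_of_nonneg (by linarith)] at hde, ?_⟩
      rw [hxr']
      rw [show xr + (t - xr) = t by ring, htr]
      exact hfar
    · refine ⟨l, hlΓ, t, xr - t, by linarith, by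
        rwa [abs_sub_comm, abs_of_nonneg (by linarith)] at hde, ?_⟩
      rw [htr]
      rw [show t + (xr - t) = xr by ring, hxr']
      rw [dist_comm]
      exact hfar
  set ε' := ε/2 with hε'def
  have hε' : 0 < ε' := by rw [hε'def]; linarith
  -- net size
  set n0 := ⌈8/ε'⌉₊ with hn0def
  have hn0pos : 0 < n0 := Nat.ceil_pos.mpr (by positivity)
  have hn0 : 1/(n0:ℝ) ≤ ε'/8 := by
    have h8 : 8/ε' ≤ (n0:ℝ) := Nat.le_ceil _
    have h9 : 1/(n0:ℝ) ≤ 1/(8/ε') := one_div_le_one_div_of_le (by positivity) h8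
    rwa [one_div_div] at h9
  -- property P j δ
  set P : ℕ → ℝ → Prop := fun j δ => ∃ l ∈ Γ, ∃ s e : ℝ, 0 ≤ e ∧ e < δ ∧
      dist (ρ l ((s:ℝ) : Circle')) (ρ l ((s + e : ℝ) : Circle')) > ε' ∧
      dist (ρ l ((s:ℝ) : Circle')) (((j : ℝ)/(n0:ℝ) : ℝ) : Circle') ≤ 1/(n0:ℝ) with hPdef
  have hPmono : ∀ j δ δ', δ ≤ δ' → P j δ → P j δ' := by
    rintro j δ δ' hδδ ⟨l, hl, s, e, he0, heδ, h1, h2⟩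
    exact ⟨l, hl, s, e, he0, lt_of_lt_of_le heδ hδδ, h1, h2⟩
  have hPexists : ∀ δ > (0:ℝ), ∃ j < n0, P j δ := by
    intro δ hδ
    obtain ⟨l, hl, s, e, he0, heδ, hfar⟩ := hpairs δ hδ
    obtain ⟨j, hjn, hjd⟩ := grid n0 hn0pos (ρ l ((s:ℝ) : Circle'))
    exact ⟨j, hjn, l, hl, s, e, he0, heδ, hfar, hjd⟩
  -- pigeonhole: one j works for all δ
  have hpigeon : ∃ j < n0, ∀ δ > (0:ℝ), P j δ := by
    by_contra hnj
    push_neg at hnj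
    choose f hf0 hfP using hnj
    -- f j is defined for j < n0; take the min over range n0
    have hne : (Finset.range n0).Nonempty := ⟨0, Finset.mem_range.mpr hn0pos⟩
    classical
    set δstar : ℝ := (Finset.range n0).inf' hne (fun j => if h : j < n0 then f j h else 1)
        with hδstar
    have hδstarpos : 0 < δstar := by
      rw [hδstar, Finset.lt_inf'_iff]
      intro j hj
      rw [dif_pos (Finset.mem_range.mp hj)]
      exact hf0 j (Finset.mem_range.mp hj)
    obtain ⟨j, hjn, hPj⟩ := hPexists δstar hδstarpos
    have hle : δstar ≤ f j hjn := by
      have := Finset.inf'_le (fun j => if h : j < n0 then f j h else 1)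
        (Finset.mem_range.mpr hjn)
      rwa [dif_pos hjn] at this
    exact hfP j hjn (hPmono j δstar (f j hjn) hle hPj)
  obtain ⟨j, hjn, hPall⟩ := hpigeon
  set ctil : ℝ := (j : ℝ)/(n0:ℝ) with hctil
  -- the contractible ball
  have hcontr : Contr Γ ρ (closedBall (((ctil + ε'/2 : ℝ)) : Circle') (ε'/4)) := by
    intro ε'' hε''
    obtain ⟨l, hlΓ, s, e, he0, heε'', hfar, hnear⟩ := hPall ε'' hε''
    obtain ⟨F, hF1, hF2, hF3⟩ := hop l
    have hF : IsLift (ρ l) F := ⟨hF1, hF2, hF3⟩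
    -- the image arc is long
    have hLpos : F s ≤ F (s + e) := hF.mono (by linarith)
    have hL : ε' < F (s + e) - F s := by
      have hd : dist (((F s : ℝ)) : Circle') (((F (s+e) : ℝ)) : Circle') > ε' := by
        rw [← hF.semiconj s, ← hF.semiconj (s+e)]; exact hfar
      have := cdist_le (F s) (F (s+e))
      rw [abs_sub_comm, abs_of_nonneg (by linarith)] at this
      linarith
    -- anchor
    obtain ⟨t0, ht0c, ht0d⟩ := exists_rep_dist (ρ l ((s:ℝ) : Circle')) ctil
    have ht0near : |t0 - ctil| ≤ ε'/8 := by
      rw [ht0d]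
      exact hnear.trans hn0
    -- t0 and F s differ by an integer
    have hcoe : ((t0 : ℝ) : Circle') = ((F s : ℝ) : Circle') := by
      rw [ht0c, hF.semiconj s]
    obtain ⟨k, hk⟩ := coe_eq_coe_iff.mp hcoe
    -- J fits in the image arc
    have habs := abs_le.mp ht0near
    have hsub1 : closedBall (((ctil + ε'/2 : ℝ)) : Circle') (ε'/4)
        ⊆ Arc (ctil + ε'/4) (ctil + 3*ε'/4) := by
      have := closedBall_subset_arc (c := ctil + ε'/2) (r := ε'/4)
      convert this using 2 <;> ring
    have hsub2 : Arc (ctil + ε'/4) (ctil + 3*ε'/4) ⊆ Arc (F s) (F (s + e)) := by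
      rw [show Arc (ctil + ε'/4) (ctil + 3*ε'/4)
          = Arc ((ctil + ε'/4) + k) ((ctil + 3*ε'/4) + k) from (arc_shift _ _ k).symm]
      apply arc_mono
      · -- F s ≤ ctil + ε'/4 + k
        have : F s = t0 + k := by rw [hk]
        linarith
      · have : F s = t0 + k := by rw [hk]
        linarith
    have himg : Arc (F s) (F (s + e)) = ρ l '' Arc s (s + e) := (hF.image_arc s (s+e)).symm
    refine ⟨l⁻¹, Γ.inv_mem hlΓ, ?_⟩
    have hJsub : ρ l⁻¹ '' closedBall (((ctil + ε'/2 : ℝ)) : Circle') (ε'/4)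
        ⊆ Arc s (s + e) := by
      intro z hz
      obtain ⟨w, hw, rfl⟩ := hz
      have hwA : w ∈ ρ l '' Arc s (s+e) := himg ▸ hsub2 (hsub1 hw)
      obtain ⟨v, hv, rfl⟩ := hwA
      have : ρ l⁻¹ (ρ l v) = v := by
        rw [← homeo_mul_apply, ← map_mul, inv_mul_cancel, map_one]; rfl
      rwa [this]
    calc diam (ρ l⁻¹ '' closedBall (((ctil + ε'/2 : ℝ)) : Circle') (ε'/4))
        ≤ diam (Arc s (s + e)) := diam_mono hJsub (isBounded_circle _)
      _ ≤ (s + e) - s := diam_arc_le (by linarith)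
      _ < ε'' := by linarith
  exact hbad _ (ε'/4) (by linarith) hcontr


lemma dense_orbit
    (hcomm : ∀ l : Λ, (Subgroup.map (MulAut.conj l⁻¹).toMonoidHom Γ).relIndex Γ ≠ 0)
    (hop : ∀ l : Λ, IsOrientationPreserving (ρ l))
    (hmsp : IsMinimalStronglyProximal ρ)
    (horb : ∀ p : Circle', (Set.range fun γ : Γ => ρ (γ : Λ) p).Infinite)
    (hbad : ∀ (c : Circle') (r : ℝ), 0 < r → ¬ Contr Γ ρ (closedBall c r))
    {Δ : Subgroup Λ} (hΔ : FI Γ Δ) (p q : Circle') {η : ℝ} (hη : 0 < η) :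
    ∃ d ∈ Δ, dist (ρ d p) q < η := by
  by_contra hcon
  push_neg at hcon
  set O : Set Circle' := {z | ∃ d ∈ Δ, ρ d p = z} with hOdef
  set X := closure O with hXdef
  have hXcl : IsClosed X := isClosed_closure
  have hXuniv : X ≠ univ := by
    intro h
    have hq : q ∈ closure O := by rw [← hXdef, h]; exact mem_univ q
    rw [Metric.mem_closure_iff] at hq
    obtain ⟨o, ⟨d, hd, rfl⟩, hod⟩ := hq η hη
    rw [dist_comm] at hod
    exact absurd hod (not_lt.mpr (hcon d hd))
  obtain ⟨δ0, hδ0, hδprop⟩ := equi hop hbad (1/8) (by norm_num)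
  set r := min (δ0/4) (1/32) with hrdef
  have hrpos : 0 < r := lt_min (by linarith) (by norm_num)
  have hr32 : r ≤ 1/32 := min_le_right _ _
  have hrδ : 2*r < δ0 := by
    have h1 : r ≤ δ0/4 := min_le_left _ _
    linarith
  obtain ⟨l, hl⟩ := hmsp X hXcl hXuniv (ball (((0:ℝ)) : Circle') r) isOpen_ball
    (nonempty_ball.mpr hrpos)
  set Y := ρ l '' X with hYdef
  set G' := Γ ⊓ cmap l Δ with hG'def
  have hG' : FI Γ G' := FI_inf_cmap hcomm l hΔ
  have hinv : ∀ g ∈ G', ρ g '' Y ⊆ Y := by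
    intro g hg
    obtain ⟨d, hd, hgd⟩ := mem_cmap.mp (Subgroup.mem_inf.mp hg).2
    have hdX : ρ d '' X ⊆ X := by
      have h1 : ρ d '' O ⊆ O := by
        rintro _ ⟨z, ⟨d', hd', rfl⟩, rfl⟩
        refine ⟨d * d', Δ.mul_mem hd hd', ?_⟩
        rw [map_mul, homeo_mul_apply]
      calc ρ d '' X ⊆ closure (ρ d '' O) :=
            image_closure_subset_closure_image (ρ d).continuous
        _ ⊆ closure O := closure_mono h1
    have hgl : g * l = l * d := by rw [← hgd]; group
    rw [hYdef, ← image_mul, hgl, image_mul]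
    exact (Set.image_mono hdX).trans le_rfl
  -- lift Y to the chart around 0
  set Y' : Set ℝ := {t | t ∈ Icc (-r) r ∧ ((t : ℝ) : Circle') ∈ Y} with hY'def
  have hYcl : IsClosed Y := by
    have : IsCompact X := hXcl.isCompact
    exact (this.image (ρ l).continuous).isClosed
  have hY'cl : IsClosed Y' := by
    have : Y' = Icc (-r) r ∩ ((fun t : ℝ => ((t:ℝ) : Circle')) ⁻¹' Y) := rfl
    rw [this]
    exact isClosed_Icc.inter (hYcl.preimage (AddCircle.continuous_mk' 1))
  have hYne : Y.Nonempty := by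
    refine ⟨ρ l p, ⟨p, ?_, rfl⟩⟩
    exact subset_closure ⟨1, Δ.one_mem, by rw [map_one]; rfl⟩
  have hY'ne : Y'.Nonempty := by
    obtain ⟨y, hy⟩ := hYne
    obtain ⟨t, htc, htd⟩ := exists_rep_dist y 0
    have : |t| < r := by
      have := hl hy
      rw [mem_ball] at this
      calc |t| = |t - 0| := by ring_nf
        _ = dist y (((0:ℝ)) : Circle') := htd
        _ < r := this
    rw [abs_lt] at this
    exact ⟨t, ⟨by linarith [this.1], by linarith [this.2]⟩, htc ▸ hy⟩
  have hY'bdd : BddBelow Y' := ⟨-r, fun t ht => ht.1.1⟩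
  set a := sInf Y' with hadef
  have haY' : a ∈ Y' := hY'cl.csInf_mem hY'ne hY'bdd
  -- membership of images with integer shifts
  have hstepA : ∀ g ∈ G', ∀ (F : ℝ ≃ₜ ℝ), IsLift (ρ g) F →
      ∀ t ∈ Y', ∃ k : ℤ, F t - k ∈ Y' := by
    intro g hg F hF t ht
    have himgY : ((F t : ℝ) : Circle') ∈ Y := by
      rw [← hF.semiconj t]
      exact hinv g hg ⟨_, ht.2, rfl⟩
    obtain ⟨w, hwc, hwd⟩ := exists_rep_dist (((F t : ℝ)) : Circle') 0
    have hwr : |w| < r := by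
      have := hl himgY
      rw [mem_ball] at this
      calc |w| = |w - 0| := by ring_nf
        _ < r := hwd ▸ this
    obtain ⟨k, hk⟩ := coe_eq_coe_iff.mp hwc.symm
    -- hk : w = F t + k ... careful with direction
    refine ⟨-k, ?_⟩
    rw [abs_lt] at hwr
    have hw : F t - (-k : ℤ) = w := by push_cast; linarith [hk]
    rw [hw]
    exact ⟨⟨by linarith [hwr.1], by linarith [hwr.2]⟩, hwc ▸ himgY⟩
  -- the image of the chart arc is short
  have hstepB : ∀ g ∈ G', ∀ (F : ℝ ≃ₜ ℝ), IsLift (ρ g) F → F r - F (-r) < 1/2 := by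
    intro g hg F hF
    by_contra hLc
    push_neg at hLc
    have harc : ρ g '' Arc (-r) r = Arc (F (-r)) (F r) := hF.image_arc _ _
    have hdiam_small : diam (ρ g '' Arc (-r) r) < 1/8 := by
      apply hδprop g (Subgroup.mem_inf.mp hg).1
      calc diam (Arc (-r) r) ≤ r - (-r) := diam_arc_le (by linarith)
        _ = 2*r := by ring
        _ < δ0 := hrδ
    have hdiam_big : (1/2:ℝ) ≤ diam (Arc (F (-r)) (F r)) :=
      diam_arc_ge_half (by linarith)
    rw [harc] at hdiam_small
    linarith
  -- uniqueness of the integer shift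
  have hstepC : ∀ g ∈ G', ∀ (F : ℝ ≃ₜ ℝ), IsLift (ρ g) F →
      ∀ t ∈ Y', ∀ t' ∈ Y', ∀ k k' : ℤ, F t - k ∈ Y' → F t' - k' ∈ Y' → k = k' := by
    intro g hg F hF t ht t' ht' k k' hk hk'
    have hFt : F (-r) ≤ F t ∧ F t ≤ F r := ⟨hF.mono ht.1.1, hF.mono ht.1.2⟩
    have hFt' : F (-r) ≤ F t' ∧ F t' ≤ F r := ⟨hF.mono ht'.1.1, hF.mono ht'.1.2⟩
    have hL := hstepB g hg F hF
    have h1 : |F t - F t'| < 1/2 := by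
      rw [abs_lt]; constructor <;> [linarith [hFt.1, hFt'.2]; linarith [hFt.2, hFt'.1]]
    have h2 : |(F t - k) - (F t' - k')| ≤ 2*r := by
      rw [abs_le]
      constructor <;>
        [linarith [hk.1.1, hk.1.2, hk'.1.1, hk'.1.2, hr32];
         linarith [hk.1.1, hk.1.2, hk'.1.1, hk'.1.2, hr32]]
    have h3 : |(k : ℝ) - k'| < 1 := by
      have : (k:ℝ) - k' = (F t - F t') - ((F t - k) - (F t' - k')) := by ring
      rw [this]
      calc |(F t - F t') - ((F t - k) - (F t' - k'))|
          ≤ |F t - F t'| + |(F t - k) - (F t' - k')| := abs_sub _ _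
        _ < 1/2 + 2*r := by linarith
        _ ≤ 1 := by linarith
    by_contra hne
    have : (1:ℤ) ≤ |k - k'| := Int.one_le_abs (sub_ne_zero.mpr hne)
    have : (1:ℝ) ≤ |(k:ℝ) - k'| := by
      have h4 : (1 : ℝ) ≤ |((k - k' : ℤ) : ℝ)| := by exact_mod_cast this
      rwa [Int.cast_sub] at h4
    linarith
  -- every element of G' fixes the point a
  have hfix : ∀ g ∈ G', ρ g ((a : ℝ) : Circle') = ((a : ℝ) : Circle') := by
    intro g hg
    obtain ⟨F, hF1, hF2, hF3⟩ := hop g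
    have hF : IsLift (ρ g) F := ⟨hF1, hF2, hF3⟩
    have hginv : g⁻¹ ∈ G' := G'.inv_mem hg
    have hFsymm : IsLift (ρ g⁻¹) F.symm := by
      have h1 : ρ g⁻¹ = (ρ g)⁻¹ := map_inv ρ g
      have h2 : (ρ g)⁻¹ = (ρ g).symm := rfl
      rw [h1, h2]
      exact hF.symm
    obtain ⟨k0, hk0⟩ := hstepA g hg F hF a haY'
    obtain ⟨k1, hk1⟩ := hstepA g⁻¹ hginv F.symm hFsymm a haY'
    -- k0 + k1 = 0
    obtain ⟨k2, hk2⟩ := hstepA g⁻¹ hginv F.symm hFsymm (F a - k0) hk0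
    have hk21 : k2 = k1 := hstepC g⁻¹ hginv F.symm hFsymm (F a - k0) hk0 a haY' k2 k1 hk2 hk1
    have hFsFa : F.symm (F a - (k0:ℝ)) = a - k0 := by
      have := hFsymm.add_int (F a) (-k0)
      push_cast at this
      rw [show F a + -(k0:ℝ) = F a - k0 by ring] at this
      rw [this, F.symm_apply_apply]
      ring
    have hmem2 : a - k0 - k2 ∈ Y' := by rw [← hFsFa]; exact hk2
    have hsum0 : k0 + k2 = 0 := by
      have h1 : -r ≤ a - k0 - k2 := hmem2.1.1
      have h2 : a - (k0:ℝ) - k2 ≤ r := hmem2.1.2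
      have h3 : -r ≤ a := haY'.1.1
      have h4 : a ≤ r := haY'.1.2
      have h5 : |((k0 + k2 : ℤ) : ℝ)| < 1 := by
        push_cast
        rw [abs_lt]
        constructor <;> [linarith [hr32]; linarith [hr32]]
      by_contra hne
      have h6 : (1:ℤ) ≤ |k0 + k2| := Int.one_le_abs hne
      have : (1:ℝ) ≤ |((k0 + k2 : ℤ) : ℝ)| := by exact_mod_cast h6
      linarith
    -- monotonicity squeeze
    have hphi : a ≤ F a - k0 := csInf_le hY'bdd hk0
    have hpsi : a ≤ F.symm a - k1 := csInf_le hY'bdd hk1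
    have hk1k0 : (k1 : ℝ) = -k0 := by
      have : k1 = -k0 := by omega
      rw [this]; push_cast; ring
    have hFA : F a ≤ a + k0 := by
      have h1 : a - k0 ≤ F.symm a := by rw [hk1k0] at hpsi; linarith
      have h2 : F (a - (k0:ℝ)) ≤ F (F.symm a) := hF.mono h1
      rw [F.apply_symm_apply] at h2
      have h3 : F (a - (k0:ℝ)) = F a - k0 := by
        have := hF.add_int a (-k0)
        push_cast at this
        rw [show a + -(k0:ℝ) = a - k0 by ring] at this
        rw [this]; ring
      linarith [h3 ▸ h2]
    have hFa : F a = a + k0 := le_antisymm hFA (by linarith)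
    rw [hF.semiconj a, hFa]
    exact_mod_cast coe_add_int a k0
  exact fixed_point_absurd horb hG' ((a : ℝ) : Circle') hfix

lemma bad_absurd
    (hcomm : ∀ l : Λ, (Subgroup.map (MulAut.conj l⁻¹).toMonoidHom Γ).relIndex Γ ≠ 0)
    (hop : ∀ l : Λ, IsOrientationPreserving (ρ l))
    (hmsp : IsMinimalStronglyProximal ρ)
    (horb : ∀ p : Circle', (Set.range fun γ : Γ => ρ (γ : Λ) p).Infinite)
    (hbad : ∀ (c : Circle') (r : ℝ), 0 < r → ¬ Contr Γ ρ (closedBall c r)) : False := by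
  -- non-contractibility constants for the two flanking arcs
  have hflank : ∀ (c : ℝ), ∃ ε > (0:ℝ), ∀ d ∈ Γ,
      ε ≤ diam (ρ d '' Arc (c - 1/24) (c + 1/24)) := by
    intro c
    have hnc : ¬ Contr Γ ρ (closedBall ((c : ℝ) : Circle') (1/24)) := hbad _ _ (by norm_num)
    rw [Contr] at hnc
    push_neg at hnc
    obtain ⟨ε, hε, hprop⟩ := hnc
    refine ⟨ε, hε, fun d hd => ?_⟩
    have h1 := hprop d hd
    have h2 : diam (ρ d '' closedBall ((c : ℝ) : Circle') (1/24))
        ≤ diam (ρ d '' Arc (c - 1/24) (c + 1/24)) :=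
      diam_mono (Set.image_mono closedBall_subset_arc) (isBounded_circle _)
    linarith
  obtain ⟨εa, hεa, hεaprop⟩ := hflank (-(1/12))
  obtain ⟨εb, hεb, hεbprop⟩ := hflank (1/12)
  set ε₁ := min εa εb with hε₁def
  have hε₁ : 0 < ε₁ := lt_min hεa hεb
  have harc_a : (-(1/12) : ℝ) - 1/24 = -(1/8) := by norm_num
  have harc_a' : (-(1/12) : ℝ) + 1/24 = -(1/24) := by norm_num
  have harc_b : (1/12 : ℝ) - 1/24 = 1/24 := by norm_num
  have harc_b' : (1/12 : ℝ) + 1/24 = 1/8 := by norm_num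
  -- the key covering fact
  have c1 : ∀ d ∈ Γ, ∀ x : Circle', dist (ρ d x) (((0:ℝ)) : Circle') < 1/24 →
      closedBall x ε₁ ⊆ ρ d⁻¹ '' Arc (-(1/8)) (1/8) := by
    intro d hd x hx
    obtain ⟨F, hF1, hF2, hF3⟩ := hop d⁻¹
    have hF : IsLift (ρ d⁻¹) F := ⟨hF1, hF2, hF3⟩
    obtain ⟨w, hwc, hwd⟩ := exists_rep_dist (ρ d x) 0
    have hwr : |w| < 1/24 := by
      calc |w| = |w - 0| := by ring_nf
        _ = dist (ρ d x) (((0:ℝ)) : Circle') := hwd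
        _ < 1/24 := hx
    rw [abs_lt] at hwr
    have hxw : x = ((F w : ℝ) : Circle') := by
      have h1 : ρ d⁻¹ (ρ d x) = x := by
        rw [← homeo_mul_apply, ← map_mul, inv_mul_cancel, map_one]; rfl
      rw [← h1, ← hwc, hF.semiconj w]
    -- flank length bounds
    have hb : ε₁ ≤ F (1/8) - F (1/24) := by
      have harc : ρ d⁻¹ '' Arc (1/24) (1/8) = Arc (F (1/24)) (F (1/8)) := hF.image_arc _ _
      have h1 : εb ≤ diam (ρ d⁻¹ '' Arc ((1/12) - 1/24) ((1/12) + 1/24)) :=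
        hεbprop d⁻¹ (Γ.inv_mem hd)
      rw [harc_b, harc_b', harc] at h1
      have h2 : diam (Arc (F (1/24)) (F (1/8))) ≤ F (1/8) - F (1/24) :=
        diam_arc_le (hF.mono (by norm_num))
      have := min_le_right εa εb
      linarith
    have ha : ε₁ ≤ F (-(1/24)) - F (-(1/8)) := by
      have harc : ρ d⁻¹ '' Arc (-(1/8)) (-(1/24)) = Arc (F (-(1/8))) (F (-(1/24))) :=
        hF.image_arc _ _
      have h1 : εa ≤ diam (ρ d⁻¹ '' Arc ((-(1/12)) - 1/24) ((-(1/12)) + 1/24)) :=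
        hεaprop d⁻¹ (Γ.inv_mem hd)
      rw [harc_a, harc_a', harc] at h1
      have h2 : diam (Arc (F (-(1/8))) (F (-(1/24)))) ≤ F (-(1/24)) - F (-(1/8)) :=
        diam_arc_le (hF.mono (by norm_num))
      have := min_le_left εa εb
      linarith
    have hsub : closedBall x ε₁ ⊆ Arc (F w - ε₁) (F w + ε₁) := by
      rw [hxw]; exact closedBall_subset_arc
    refine hsub.trans ?_
    rw [hF.image_arc (-(1/8)) (1/8)]
    apply arc_mono
    · have : F (-(1/24)) ≤ F w := hF.mono (by linarith [hwr.1])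
      linarith
    · have : F w ≤ F (1/24) := hF.mono (by linarith [hwr.2])
      linarith
  -- grid size
  set N := ⌈1/ε₁⌉₊ with hNdef
  have hNpos : 0 < N := Nat.ceil_pos.mpr (by positivity)
  have hN : 1/(N:ℝ) ≤ ε₁ := by
    have h8 : 1/ε₁ ≤ (N:ℝ) := Nat.le_ceil _
    have h9 : 1/(N:ℝ) ≤ 1/(1/ε₁) := one_div_le_one_div_of_le (by positivity) h8
    rwa [one_div_one_div] at h9
  set ε₂ := 1/(8*(N:ℝ)) with hε₂def
  have hε₂ : 0 < ε₂ := by rw [hε₂def]; positivity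
  obtain ⟨δ0, hδ0, hδprop⟩ := equi hop hbad ε₂ hε₂
  -- contract the big arc with the ambient group
  have hK₀cl : IsClosed (Arc (-(1/8)) (1/8)) := isClosed_arc _ _
  obtain ⟨l, hl⟩ := hmsp (Arc (-(1/8)) (1/8)) hK₀cl arc_ne_univ
    (ball (((0:ℝ)) : Circle') (δ0/4)) isOpen_ball (nonempty_ball.mpr (by linarith))
  have hsmall : diam (ρ l '' Arc (-(1/8)) (1/8)) < δ0 := by
    have h1 : diam (ρ l '' Arc (-(1/8)) (1/8)) ≤ diam (ball (((0:ℝ)) : Circle') (δ0/4)) :=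
      diam_mono hl (isBounded_circle _)
    have h2 : diam (ball (((0:ℝ)) : Circle') (δ0/4)) ≤ 2 * (δ0/4) := diam_ball (by linarith)
    linarith
  set Δ := Γ ⊓ cmap l⁻¹ Γ with hΔdef
  have hΔ : FI Γ Δ := FI_inf_cmap hcomm l⁻¹ FI_self
  -- choose the moving elements
  have hdj : ∀ j : ℕ, ∃ d ∈ Δ, dist (ρ d ((((j:ℝ)/(N:ℝ)) : ℝ) : Circle')) (((0:ℝ)) : Circle')
      < 1/24 :=
    fun j => dense_orbit hcomm hop hmsp horb hbad hΔ _ _ (by norm_num)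
  choose dj hdjΔ hdjd using hdj
  -- covering of the circle
  have hcover : (univ : Set Circle') ⊆
      ⋃ j ∈ Finset.range N, ρ (dj j)⁻¹ '' Arc (-(1/8)) (1/8) := by
    intro y _
    obtain ⟨j, hjN, hjd⟩ := grid N hNpos y
    have hyball : y ∈ closedBall ((((j:ℝ)/(N:ℝ)) : ℝ) : Circle') ε₁ :=
      mem_closedBall.mpr (hjd.trans hN)
    have := c1 (dj j) (Subgroup.mem_inf.mp (hdjΔ j)).1 _ (hdjd j) hyball
    exact mem_biUnion (Finset.mem_range.mpr hjN) this
  -- transport the covering by l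
  have hcover2 : (univ : Set Circle') ⊆
      ⋃ j ∈ Finset.range N, ρ l '' (ρ (dj j)⁻¹ '' Arc (-(1/8)) (1/8)) := by
    intro y _
    have hy : ρ l⁻¹ y ∈ (univ : Set Circle') := mem_univ _
    obtain ⟨j, hjF, hmem⟩ := by
      have := hcover hy
      simpa only [mem_iUnion, exists_prop] using this
    refine mem_biUnion hjF ⟨ρ l⁻¹ y, hmem, ?_⟩
    rw [← homeo_mul_apply, ← map_mul, mul_inv_cancel, map_one]; rfl
  -- each piece is small
  have hpiece : ∀ j : ℕ, diam (ρ l '' (ρ (dj j)⁻¹ '' Arc (-(1/8)) (1/8))) < ε₂ := by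
    intro j
    obtain ⟨g, hgΓ, hgeq⟩ := mem_cmap.mp (Subgroup.mem_inf.mp (hdjΔ j)).2
    -- hgeq : l⁻¹ * g * l⁻¹⁻¹ = dj j
    have hkey : l * (dj j)⁻¹ = g⁻¹ * l := by
      rw [← hgeq]; group
    rw [← image_mul, hkey, image_mul]
    exact hδprop g⁻¹ (Γ.inv_mem hgΓ) _ hsmall
  -- measure contradiction
  have hvol : (volume (univ : Set Circle')) ≤
      ∑ j ∈ Finset.range N, volume (ρ l '' (ρ (dj j)⁻¹ '' Arc (-(1/8)) (1/8))) :=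
    le_trans (measure_mono hcover2) (measure_biUnion_finset_le _ _)
  have hvolsmall : ∀ j : ℕ, volume (ρ l '' (ρ (dj j)⁻¹ '' Arc (-(1/8)) (1/8)))
      ≤ ENNReal.ofReal (2*ε₂) := by
    intro j
    have hne : (ρ l '' (ρ (dj j)⁻¹ '' Arc (-(1/8)) (1/8))).Nonempty :=
      ((arc_nonempty (by norm_num)).image _).image _
    obtain ⟨c, hc⟩ := hne
    have hsub : ρ l '' (ρ (dj j)⁻¹ '' Arc (-(1/8)) (1/8)) ⊆ closedBall c ε₂ := by
      intro z hz
      exact mem_closedBall.mpr (le_of_lt (lt_of_le_of_lt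
        (dist_le_diam_of_mem (isBounded_circle _) hz hc) (hpiece j)))
    calc volume (ρ l '' (ρ (dj j)⁻¹ '' Arc (-(1/8)) (1/8))) ≤ volume (closedBall c ε₂) :=
          measure_mono hsub
      _ = ENNReal.ofReal (min 1 (2*ε₂)) := by
          rw [AddCircle.volume_closedBall]
      _ ≤ ENNReal.ofReal (2*ε₂) := ENNReal.ofReal_le_ofReal (min_le_right _ _)
  have hsum : ∑ j ∈ Finset.range N, volume (ρ l '' (ρ (dj j)⁻¹ '' Arc (-(1/8)) (1/8)))
      ≤ (N : ℝ≥0∞) * ENNReal.ofReal (2*ε₂) := by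
    calc ∑ j ∈ Finset.range N, volume (ρ l '' (ρ (dj j)⁻¹ '' Arc (-(1/8)) (1/8)))
        ≤ ∑ _j ∈ Finset.range N, ENNReal.ofReal (2*ε₂) :=
          Finset.sum_le_sum (fun j _ => hvolsmall j)
      _ = (N : ℝ≥0∞) * ENNReal.ofReal (2*ε₂) := by
          rw [Finset.sum_const, Finset.card_range, nsmul_eq_mul]
  have hfinal : (ENNReal.ofReal 1) ≤ ENNReal.ofReal (1/4) := by
    have huniv : volume (univ : Set Circle') = ENNReal.ofReal 1 := AddCircle.measure_univ 1
    have hNcast : (N : ℝ≥0∞) * ENNReal.ofReal (2*ε₂) = ENNReal.ofReal ((N:ℝ) * (2*ε₂)) := by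
      rw [← ENNReal.ofReal_natCast N, ← ENNReal.ofReal_mul (by positivity)]
    have hval : (N:ℝ) * (2*ε₂) = 1/4 := by
      rw [hε₂def]
      field_simp
      ring
    calc ENNReal.ofReal 1 = volume (univ : Set Circle') := huniv.symm
      _ ≤ (N : ℝ≥0∞) * ENNReal.ofReal (2*ε₂) := le_trans hvol hsum
      _ = ENNReal.ofReal ((N:ℝ) * (2*ε₂)) := hNcast
      _ = ENNReal.ofReal (1/4) := by rw [hval]
  have : (1:ℝ) ≤ 1/4 := (ENNReal.ofReal_le_ofReal_iff (by norm_num)).mp hfinal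
  linarith

end Bad
end Stmt14

/-- If `Λ` commensurates its subgroup `Γ` and acts on the circle minimally and strongly
proximally by orientation-preserving homeomorphisms, with every `Γ`-orbit infinite, then the
restricted `Γ`-action is also minimal and strongly proximal. -/
theorem statement14 {Λ : Type*} [Group Λ] (Γ : Subgroup Λ)
    (hcomm : ∀ l : Λ, (Subgroup.map (MulAut.conj l⁻¹).toMonoidHom Γ).relIndex Γ ≠ 0)
    (ρ : Λ →* (Circle' ≃ₜ Circle'))
    (hop : ∀ l : Λ, IsOrientationPreserving (ρ l))
    (hmsp : IsMinimalStronglyProximal ρ)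
    (horb : ∀ p : Circle', (Set.range fun γ : Γ => ρ (γ : Λ) p).Infinite) :
    IsMinimalStronglyProximal (ρ.comp Γ.subtype) := by
  classical
  by_cases hgood : ∃ (c : Circle') (r : ℝ), 0 < r ∧ Stmt14.Contr Γ ρ (Metric.closedBall c r)
  · exact Stmt14.main_good hcomm hmsp horb hgood
  · exfalso
    push_neg at hgood
    exact Stmt14.bad_absurd hcomm hop hmsp horb fun c r hr hc => hgood c r hr hc
end
end

section
/- Let Λ be a group acting on a set B, Γ ≤ Λ a subgroup, and ρ : Λ → Homeo(S¹) a homomorphism, with the induced affine action on Borel probability measures by pushforward. Fix λ ∈ Λ and suppose Γ'_λ = Γ ∩ λ⁻¹Γλ has finite index n in Γ; let g₁, …, g_n ∈ Γ be representatives of the right cosets Γ'_λ\Γ, so Γ is the disjoint union of the cosets Γ'_λ g_i. Let Φ : B → Prob(S¹) satisfy Φ(γ·x) = ρ(γ)_*Φ(x) for all γ ∈ Γ and all x ∈ B. Define Φ_λ : B → Prob(S¹) by Φ_λ(x) = (1/n) Σ_{i=1}^{n} ρ(g_i⁻¹)_* ρ(λ⁻¹)_* Φ(λ g_i · x). Then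 Φ_λ is Γ-equivariant: Φ_λ(γ·x) = ρ(γ)_*Φ_λ(x) for all γ ∈ Γ and all x ∈ B. -/
noncomputable section

open MeasureTheory Set Function
open scoped ENNReal

lemma circle_homeo_measurable (h : Circle' ≃ₜ Circle') : Measurable h :=
  h.continuous.measurable

lemma map_rho_mul {Λ : Type*} [Group Λ] (ρ : Λ →* (Circle' ≃ₜ Circle')) (a b : Λ)
    (μ : Measure Circle') :
    Measure.map (ρ a) (Measure.map (ρ b) μ) = Measure.map (ρ (a * b)) μ := by
  rw [Measure.map_map (circle_homeo_measurable _) (circle_homeo_measurable _)]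
  congr 1
  ext x
  simp [map_mul]

lemma map_measure_sum {ι : Type*} (s : Finset ι) (μ : ι → Measure Circle')
    (f : Circle' → Circle') (hf : Measurable f) :
    Measure.map f (∑ i ∈ s, μ i) = ∑ i ∈ s, Measure.map f (μ i) := by
  classical
  induction s using Finset.induction with
  | empty => simp
  | insert _ _ hnotmem ih =>
      rw [Finset.sum_insert hnotmem, Finset.sum_insert hnotmem,
        Measure.map_add _ _ hf, ih]

/-- The averaged map `Φ_λ(x) = (1/n) Σᵢ ρ(gᵢ⁻¹)_* ρ(λ⁻¹)_* Φ(λ gᵢ · x)` associated to a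
`Γ`-equivariant map `Φ : B → Prob(S¹)` and a commensurating element `λ` with coset
representatives `g₁, …, g_n` of `Γ'_λ\Γ` is again `Γ`-equivariant. -/
theorem statement16 {Λ B : Type*} [Group Λ] [MulAction Λ B]
    (Γ : Subgroup Λ) (ρ : Λ →* (Circle' ≃ₜ Circle'))
    (l : Λ) (n : ℕ) (hn : 0 < n)
    (Γ' : Subgroup Λ)
    (hΓ' : Γ' = Γ ⊓ Subgroup.map (MulAut.conj l⁻¹).toMonoidHom Γ)
    (g : Fin n → Λ) (hg : ∀ i, g i ∈ Γ)
    (hcoset : ∀ γ ∈ Γ, ∃! i : Fin n, γ * (g i)⁻¹ ∈ Γ')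
    (Φ : B → Measure Circle')
    (hΦprob : ∀ x : B, IsProbabilityMeasure (Φ x))
    (hΦequiv : ∀ γ ∈ Γ, ∀ x : B, Φ (γ • x) = Measure.map (ρ γ) (Φ x))
    (Φl : B → Measure Circle')
    (hΦl : ∀ x : B, Φl x = (n : ℝ≥0∞)⁻¹ • ∑ i : Fin n,
      Measure.map (ρ (g i)⁻¹) (Measure.map (ρ l⁻¹) (Φ ((l * g i) • x)))) :
    ∀ γ ∈ Γ, ∀ x : B, Φl (γ • x) = Measure.map (ρ γ) (Φl x) := by
  intro γ hγ x
  classical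
  have hmem : ∀ i, g i * γ ∈ Γ := fun i => Γ.mul_mem (hg i) hγ
  choose σ hσ hσuniq using fun i => hcoset (g i * γ) (hmem i)
  have hσinj : Function.Injective σ := by
    intro i j hij
    have h1 := hσ i
    have h2 := hσ j
    rw [hij] at h1
    have hmem2 : g i * (g j)⁻¹ ∈ Γ' := by
      have := mul_mem h1 (inv_mem h2)
      have heq : g i * γ * (g (σ j))⁻¹ * (g j * γ * (g (σ j))⁻¹)⁻¹
          = g i * (g j)⁻¹ := by group
      rwa [heq] at this
    obtain ⟨k, hk, hkuniq⟩ := hcoset (g i) (hg i)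
    have hi : i = k := hkuniq i (by simpa using Γ'.one_mem)
    have hj : j = k := hkuniq j hmem2
    rw [hi, hj]
  have hσbij : Function.Bijective σ := Finite.injective_iff_bijective.mp hσinj
  -- the key per-term identity
  have key : ∀ i : Fin n,
      Measure.map (ρ (g i)⁻¹) (Measure.map (ρ l⁻¹) (Φ ((l * g i) • (γ • x))))
      = Measure.map (ρ γ) (Measure.map (ρ (g (σ i))⁻¹)
          (Measure.map (ρ l⁻¹) (Φ ((l * g (σ i)) • x)))) := by
    intro i
    set δ := g i * γ * (g (σ i))⁻¹ with hδ
    have hδΓ' : δ ∈ Γ' := hσ i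
    rw [hΓ'] at hδΓ'
    obtain ⟨hδΓ, a, haΓ, ha⟩ := hδΓ'
    have ha' : l * δ * l⁻¹ ∈ Γ := by
      have : (MulAut.conj l⁻¹) a = δ := ha
      have haeq : a = l * δ * l⁻¹ := by
        rw [← this]; simp [MulAut.conj_apply]; group
      rwa [haeq] at haΓ
    have hpt : (l * g i) • (γ • x) = (l * δ * l⁻¹) • ((l * g (σ i)) • x) := by
      rw [smul_smul, smul_smul]
      congr 1
      rw [hδ]; group
    rw [hpt, hΦequiv _ ha', map_rho_mul, map_rho_mul, map_rho_mul, map_rho_mul]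
    congr 2
    rw [hδ]; group
  rw [hΦl (γ • x), hΦl x, Measure.map_smul]
  congr 1
  rw [map_measure_sum _ _ _ (circle_homeo_measurable _)]
  calc ∑ i : Fin n,
        Measure.map (ρ (g i)⁻¹) (Measure.map (ρ l⁻¹) (Φ ((l * g i) • (γ • x))))
      = ∑ i : Fin n, Measure.map (ρ γ) (Measure.map (ρ (g (σ i))⁻¹)
          (Measure.map (ρ l⁻¹) (Φ ((l * g (σ i)) • x)))) := by
        exact Finset.sum_congr rfl fun i _ => key i
    _ = ∑ j : Fin n, Measure.map (ρ γ) (Measure.map (ρ (g j)⁻¹)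
          (Measure.map (ρ l⁻¹) (Φ ((l * g j) • x)))) := by
        exact Fintype.sum_bijective σ hσbij _ _ (fun i => rfl)
end
end

section
/- For three points a, b, c of the circle S¹ = ℝ/ℤ say that (a,b,c) is positively oriented if there exist lifts ã, b̃, c̃ ∈ ℝ of a, b, c with ã < b̃ < c̃ < ã + 1, negatively oriented if (a,c,b) is positively oriented, and degenerate if the three points are not pairwise distinct; write ω(a,b,c) = +1, −1, 0 accordingly. Then for tuples x = (x₁,…,x_n) and y = (y₁,…,y_n) in (S¹)ⁿ the following are equivalent: (i) there exists an orientation-preserving homeomorphism h of S¹ with h(x_i) = y_i for all i = 1,…,n; (ii) for all indices i, j one has x_i = x_j if and only if y_i = y_j, and for all indices i, j, k one has ω(x_i, x_j, x_k) = ω(y_i, y_j, y_k). -/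
noncomputable section

open MeasureTheory Set Function
open scoped ENNReal

/-- `(a, b, c)` is positively oriented on `S¹ = ℝ/ℤ` if there are lifts `x < y < z < x + 1`. -/
def PositivelyOriented (a b c : Circle') : Prop :=
  ∃ x y z : ℝ, (x : Circle') = a ∧ (y : Circle') = b ∧ (z : Circle') = c ∧
    x < y ∧ y < z ∧ z < x + 1

open Classical in
/-- The orientation cocycle `ω` on triples of points of the circle: `+1` for positively
oriented triples, `−1` for negatively oriented ones, `0` for degenerate ones. -/
def orient (a b c : Circle') : ℤ :=
  if PositivelyOriented a b c then 1 else if PositivelyOriented a c b then -1 else 0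



namespace PLH

def idxFin {m : ℕ} (hm : 0 < m) (k : ℤ) : Fin m :=
  ⟨(k % (m:ℤ)).toNat, by
    have h0 : ((m:ℤ)) ≠ 0 := by exact_mod_cast hm.ne'
    have h1 : 0 ≤ k % (m:ℤ) := Int.emod_nonneg k h0
    have h2 : k % (m:ℤ) < m := Int.emod_lt_of_pos k (by exact_mod_cast hm)
    omega⟩

lemma idxFin_coe {m : ℕ} (hm : 0 < m) (k : ℤ) : ((idxFin hm k : ℕ) : ℤ) = k % m := by
  have h0 : ((m:ℤ)) ≠ 0 := by exact_mod_cast hm.ne'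
  have h1 : 0 ≤ k % (m:ℤ) := Int.emod_nonneg k h0
  simp [idxFin, Int.toNat_of_nonneg h1]

noncomputable def ext {m : ℕ} (hm : 0 < m) (a : Fin m → ℝ) (k : ℤ) : ℝ :=
  a (idxFin hm k) + ((k / (m:ℤ) : ℤ) : ℝ)

variable {m : ℕ} (hm : 0 < m) (a : Fin m → ℝ)

lemma idxFin_add (k : ℤ) : idxFin hm (k + m) = idxFin hm k := by
  apply Fin.ext
  have : (k + (m:ℤ)) % m = k % m := by
    conv_lhs => rw [show k + (m:ℤ) = k + m * 1 by ring]
    rw [Int.add_mul_emod_self_left]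
  simp [idxFin, this]

lemma ext_add (k : ℤ) : ext hm a (k + m) = ext hm a k + 1 := by
  have h0 : ((m:ℤ)) ≠ 0 := by exact_mod_cast hm.ne'
  have hdiv : (k + (m:ℤ)) / m = k / m + 1 := by
    have := Int.add_mul_ediv_right k 1 h0
    simpa using this
  simp [ext, idxFin_add, hdiv]
  push_cast
  ring

lemma ext_int_add (k : ℤ) (q : ℤ) : ext hm a (k + q * m) = ext hm a k + q := by
  induction q using Int.induction_on with
  | zero => simp
  | succ n ih =>
      have : k + ((n:ℤ) + 1) * m = (k + n * m) + m := by ring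
      rw [this, ext_add hm a, ih]; push_cast; ring
  | pred n ih =>
      have : (k + (-(n:ℤ) - 1) * m) + m = k + (-(n:ℤ)) * m := by ring
      have h2 := ext_add hm a (k + (-(n:ℤ) - 1) * m)
      rw [this, ih] at h2
      push_cast at h2 ⊢
      linarith

lemma ext_lt_succ (ha : StrictMono a) (ha1 : ∀ i, a i < a ⟨0, hm⟩ + 1) (k : ℤ) :
    ext hm a k < ext hm a (k + 1) := by
  have h0 : ((m:ℤ)) ≠ 0 := by exact_mod_cast hm.ne'
  have h1 : 0 ≤ k % (m:ℤ) := Int.emod_nonneg k h0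
  have h2 : k % (m:ℤ) < m := Int.emod_lt_of_pos k (by exact_mod_cast hm)
  have hk : (m:ℤ) * (k / m) + k % m = k := Int.mul_ediv_add_emod k m
  rcases lt_or_eq_of_le (by omega : k % (m:ℤ) + 1 ≤ m) with hlt | heq
  · -- (k+1) % m = k % m + 1, (k+1)/m = k/m
    have e1 : k + 1 = (k % m + 1) + (m:ℤ) * (k / m) := by omega
    have hmod : (k + 1) % m = k % m + 1 := by
      rw [e1, Int.add_mul_emod_self_left, Int.emod_eq_of_lt (by omega) hlt]
    have hdivd : (k + 1) / m = k / m := by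
      rw [e1, Int.add_mul_ediv_left _ _ h0, Int.ediv_eq_zero_of_lt (by omega) hlt, zero_add]
    have hidx : (idxFin hm (k+1) : ℕ) = (idxFin hm k : ℕ) + 1 := by
      have c1 := idxFin_coe hm (k+1)
      have c2 := idxFin_coe hm k
      omega
    have : a (idxFin hm k) < a (idxFin hm (k+1)) := ha (by
      rw [Fin.lt_def, hidx]; omega)
    simp only [ext, hdivd]
    linarith
  · -- k % m = m - 1 : (k+1) = m * (k/m + 1)
    have e0 : (m:ℤ) * (k / m + 1) = m * (k / m) + m := by ring
    have e1 : k + 1 = (m:ℤ) * (k / m + 1) := by omega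
    have hmod : (k + 1) % m = 0 := by rw [e1]; exact Int.mul_emod_right _ _
    have hdivd : (k + 1) / m = k / m + 1 := by
      rw [e1]; exact Int.mul_ediv_cancel_left _ h0
    have hidx : idxFin hm (k+1) = ⟨0, hm⟩ := by
      apply Fin.ext
      have c1 := idxFin_coe hm (k+1)
      simp only [hmod] at c1
      show (idxFin hm (k+1) : ℕ) = 0
      omega
    have hlt := ha1 (idxFin hm k)
    simp only [ext, hdivd, hidx]
    push_cast
    linarith

lemma ext_mono (ha : StrictMono a) (ha1 : ∀ i, a i < a ⟨0, hm⟩ + 1) :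
    StrictMono (ext hm a) :=
  strictMono_int_of_lt_succ (ext_lt_succ hm a ha ha1)

lemma ext_coe (i : Fin m) : ext hm a ((i : ℕ) : ℤ) = a i := by
  have h2 : ((i:ℕ):ℤ) < m := by exact_mod_cast i.2
  have hmod : ((i:ℕ):ℤ) % m = i := Int.emod_eq_of_lt (by positivity) h2
  have hdivd : ((i:ℕ):ℤ) / m = 0 := Int.ediv_eq_zero_of_lt (by positivity) h2
  have hidx : idxFin hm ((i:ℕ):ℤ) = i := by
    apply Fin.ext
    have := idxFin_coe hm ((i:ℕ):ℤ)
    show (idxFin hm ((i:ℕ):ℤ) : ℕ) = (i : ℕ)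
    omega
  simp [ext, hidx, hdivd]

lemma ext_zero : ext hm a 0 = a ⟨0, hm⟩ := by
  have := ext_coe hm a ⟨0, hm⟩
  simpa using this

lemma ext_mul (q : ℤ) : ext hm a (q * m) = a ⟨0, hm⟩ + q := by
  have := ext_int_add hm a 0 q
  simpa [ext_zero hm a] using this

lemma ext_exists_idx (ha : StrictMono a) (ha1 : ∀ i, a i < a ⟨0, hm⟩ + 1) (t : ℝ) :
    ∃ k : ℤ, ext hm a k ≤ t ∧ t < ext hm a (k + 1) := by
  classical
  set a0 := a ⟨0, hm⟩ with ha0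
  set q : ℤ := ⌊t - a0⌋ with hq
  have hbase : ext hm a (q * m) ≤ t := by
    rw [ext_mul hm a]
    have := Int.floor_le (t - a0)
    linarith
  have hbdd : ∀ z : ℤ, ext hm a z ≤ t → z ≤ (m:ℤ) * q + m := by
    intro z hz
    have hlow : a0 + ((z / m : ℤ) : ℝ) ≤ ext hm a z := by
      have : a0 ≤ a (idxFin hm z) := ha.monotone (by
        rw [Fin.le_def]; exact Nat.zero_le _)
      simp only [ext]; linarith
    have hled : ((z / m : ℤ) : ℝ) ≤ t - a0 := by linarith
    have hq2 : z / m ≤ q := Int.le_floor.mpr hled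
    have h0 : ((m:ℤ)) ≠ 0 := by exact_mod_cast hm.ne'
    have hz2 : (m:ℤ) * (z / m) + z % m = z := Int.mul_ediv_add_emod z m
    have h2 : z % (m:ℤ) < m := Int.emod_lt_of_pos z (by exact_mod_cast hm)
    nlinarith [mul_le_mul_of_nonneg_left hq2 (by positivity : (0:ℤ) ≤ m)]
  obtain ⟨lub, hlub, hmax⟩ := Int.exists_greatest_of_bdd
    (P := fun z => ext hm a z ≤ t) ⟨(m:ℤ) * q + m, hbdd⟩ ⟨q * m, hbase⟩
  refine ⟨lub, hlub, ?_⟩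
  by_contra hcon
  push_neg at hcon
  have := hmax (lub + 1) hcon
  omega

lemma ext_idx_unique (ha : StrictMono a) (ha1 : ∀ i, a i < a ⟨0, hm⟩ + 1) {t : ℝ} {j k : ℤ}
    (hj1 : ext hm a j ≤ t) (hj2 : t < ext hm a (j + 1))
    (hk1 : ext hm a k ≤ t) (hk2 : t < ext hm a (k + 1)) : j = k := by
  by_contra hne
  have hmono := ext_mono hm a ha ha1
  rcases lt_or_gt_of_ne hne with h | h
  · have : ext hm a (j + 1) ≤ ext hm a k := hmono.monotone (by omega)
    linarith
  · have : ext hm a (k + 1) ≤ ext hm a j := hmono.monotone (by omega)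
    linarith

end PLH

namespace PLH

variable {m : ℕ}

noncomputable def plIdx (hm : 0 < m) (a : Fin m → ℝ) (ha : StrictMono a)
    (ha1 : ∀ i, a i < a ⟨0, hm⟩ + 1) (t : ℝ) : ℤ :=
  (ext_exists_idx hm a ha ha1 t).choose

lemma plIdx_spec (hm : 0 < m) (a : Fin m → ℝ) (ha : StrictMono a)
    (ha1 : ∀ i, a i < a ⟨0, hm⟩ + 1) (t : ℝ) :
    ext hm a (plIdx hm a ha ha1 t) ≤ t ∧ t < ext hm a (plIdx hm a ha ha1 t + 1) :=
  (ext_exists_idx hm a ha ha1 t).choose_spec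

lemma plIdx_eq (hm : 0 < m) (a : Fin m → ℝ) (ha : StrictMono a)
    (ha1 : ∀ i, a i < a ⟨0, hm⟩ + 1) {t : ℝ} {k : ℤ}
    (h1 : ext hm a k ≤ t) (h2 : t < ext hm a (k + 1)) :
    plIdx hm a ha ha1 t = k :=
  ext_idx_unique hm a ha ha1 (plIdx_spec hm a ha ha1 t).1 (plIdx_spec hm a ha ha1 t).2 h1 h2

noncomputable def plF (hm : 0 < m) (a b : Fin m → ℝ) (ha : StrictMono a)
    (ha1 : ∀ i, a i < a ⟨0, hm⟩ + 1) (t : ℝ) : ℝ :=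
  let k := plIdx hm a ha ha1 t
  ext hm b k + (ext hm b (k + 1) - ext hm b k) * (t - ext hm a k)
    / (ext hm a (k + 1) - ext hm a k)

lemma plF_eq (hm : 0 < m) (a b : Fin m → ℝ) (ha : StrictMono a)
    (ha1 : ∀ i, a i < a ⟨0, hm⟩ + 1)
    {t : ℝ} {k : ℤ} (h1 : ext hm a k ≤ t) (h2 : t < ext hm a (k + 1)) :
    plF hm a b ha ha1 t = ext hm b k + (ext hm b (k + 1) - ext hm b k) * (t - ext hm a k)
      / (ext hm a (k + 1) - ext hm a k) := by
  unfold plF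
  rw [plIdx_eq hm a ha ha1 h1 h2]

lemma plF_lower (hm : 0 < m) (a b : Fin m → ℝ) (ha : StrictMono a)
    (ha1 : ∀ i, a i < a ⟨0, hm⟩ + 1) (hb : StrictMono b) (hb1 : ∀ i, b i < b ⟨0, hm⟩ + 1)
    {t : ℝ} {k : ℤ} (h1 : ext hm a k ≤ t) (h2 : t < ext hm a (k + 1)) :
    ext hm b k ≤ plF hm a b ha ha1 t := by
  rw [plF_eq hm a b ha ha1 h1 h2]
  have hA : 0 < ext hm a (k+1) - ext hm a k := by
    have := ext_lt_succ hm a ha ha1 k; linarith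
  have hB : 0 < ext hm b (k+1) - ext hm b k := by
    have := ext_lt_succ hm b hb hb1 k; linarith
  have : 0 ≤ (ext hm b (k + 1) - ext hm b k) * (t - ext hm a k)
      / (ext hm a (k + 1) - ext hm a k) :=
    div_nonneg (mul_nonneg hB.le (by linarith)) hA.le
  linarith

lemma plF_upper (hm : 0 < m) (a b : Fin m → ℝ) (ha : StrictMono a)
    (ha1 : ∀ i, a i < a ⟨0, hm⟩ + 1) (hb : StrictMono b) (hb1 : ∀ i, b i < b ⟨0, hm⟩ + 1)
    {t : ℝ} {k : ℤ} (h1 : ext hm a k ≤ t) (h2 : t < ext hm a (k + 1)) :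
    plF hm a b ha ha1 t < ext hm b (k + 1) := by
  rw [plF_eq hm a b ha ha1 h1 h2]
  have hA : 0 < ext hm a (k+1) - ext hm a k := by
    have := ext_lt_succ hm a ha ha1 k; linarith
  have hB : 0 < ext hm b (k+1) - ext hm b k := by
    have := ext_lt_succ hm b hb hb1 k; linarith
  have hlt : (ext hm b (k + 1) - ext hm b k) * (t - ext hm a k)
      / (ext hm a (k + 1) - ext hm a k)
      < (ext hm b (k + 1) - ext hm b k) := by
    rw [div_lt_iff₀ hA]
    nlinarith
  linarith

lemma plF_at (hm : 0 < m) (a b : Fin m → ℝ) (ha : StrictMono a)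
    (ha1 : ∀ i, a i < a ⟨0, hm⟩ + 1) (k : ℤ) :
    plF hm a b ha ha1 (ext hm a k) = ext hm b k := by
  rw [plF_eq hm a b ha ha1 le_rfl (ext_lt_succ hm a ha ha1 k)]
  simp

lemma plF_strictMono (hm : 0 < m) (a b : Fin m → ℝ) (ha : StrictMono a)
    (ha1 : ∀ i, a i < a ⟨0, hm⟩ + 1) (hb : StrictMono b) (hb1 : ∀ i, b i < b ⟨0, hm⟩ + 1) :
    StrictMono (plF hm a b ha ha1) := by
  intro s t hst
  obtain ⟨hj1, hj2⟩ := plIdx_spec hm a ha ha1 s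
  obtain ⟨hk1, hk2⟩ := plIdx_spec hm a ha ha1 t
  generalize hJ : plIdx hm a ha ha1 s = j at hj1 hj2
  generalize hK : plIdx hm a ha ha1 t = k at hk1 hk2
  have hmono := ext_mono hm a ha ha1
  have hjk : j ≤ k := by
    by_contra hcon
    push_neg at hcon
    have : ext hm a (k + 1) ≤ ext hm a j := hmono.monotone (by omega)
    linarith
  rcases eq_or_lt_of_le hjk with heq | hlt
  · subst heq
    rw [plF_eq hm a b ha ha1 hj1 hj2, plF_eq hm a b ha ha1 hk1 hk2]
    have hA : 0 < ext hm a (j+1) - ext hm a j := by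
      have := ext_lt_succ hm a ha ha1 j; linarith
    have hB : 0 < ext hm b (j+1) - ext hm b j := by
      have := ext_lt_succ hm b hb hb1 j; linarith
    have key : (ext hm b (j + 1) - ext hm b j) * (s - ext hm a j)
        < (ext hm b (j + 1) - ext hm b j) * (t - ext hm a j) := by nlinarith
    have := (div_lt_div_iff_of_pos_right hA).mpr key
    linarith
  · have h1 : plF hm a b ha ha1 s < ext hm b (j + 1) := plF_upper hm a b ha ha1 hb hb1 hj1 hj2
    have h2 : ext hm b (j + 1) ≤ ext hm b k := (ext_mono hm b hb hb1).monotone (by omega)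
    have h3 : ext hm b k ≤ plF hm a b ha ha1 t := plF_lower hm a b ha ha1 hb hb1 hk1 hk2
    linarith

lemma plF_surjective (hm : 0 < m) (a b : Fin m → ℝ) (ha : StrictMono a)
    (ha1 : ∀ i, a i < a ⟨0, hm⟩ + 1) (hb : StrictMono b) (hb1 : ∀ i, b i < b ⟨0, hm⟩ + 1) :
    Function.Surjective (plF hm a b ha ha1) := by
  intro v
  obtain ⟨k, hk1, hk2⟩ := ext_exists_idx hm b hb hb1 v
  have hA : 0 < ext hm a (k+1) - ext hm a k := by
    have := ext_lt_succ hm a ha ha1 k; linarith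
  have hB : 0 < ext hm b (k+1) - ext hm b k := by
    have := ext_lt_succ hm b hb hb1 k; linarith
  obtain ⟨t, ht⟩ : ∃ t : ℝ, t = ext hm a k + (v - ext hm b k) * (ext hm a (k+1) - ext hm a k)
      / (ext hm b (k+1) - ext hm b k) := ⟨_, rfl⟩
  have hQ0 : 0 ≤ (v - ext hm b k) * (ext hm a (k+1) - ext hm a k)
      / (ext hm b (k+1) - ext hm b k) :=
    div_nonneg (mul_nonneg (by linarith) hA.le) hB.le
  have ht1 : ext hm a k ≤ t := by linarith
  have ht2 : t < ext hm a (k + 1) := by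
    have hQ1 : (v - ext hm b k) * (ext hm a (k+1) - ext hm a k)
      / (ext hm b (k+1) - ext hm b k) < ext hm a (k+1) - ext hm a k := by
      rw [div_lt_iff₀ hB]
      nlinarith
    linarith
  refine ⟨t, ?_⟩
  rw [plF_eq hm a b ha ha1 ht1 ht2, ht]
  field_simp
  ring

lemma plF_add_one (hm : 0 < m) (a b : Fin m → ℝ) (ha : StrictMono a)
    (ha1 : ∀ i, a i < a ⟨0, hm⟩ + 1) (hb : StrictMono b) (hb1 : ∀ i, b i < b ⟨0, hm⟩ + 1)
    (t : ℝ) : plF hm a b ha ha1 (t + 1) = plF hm a b ha ha1 t + 1 := by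
  obtain ⟨hj1, hj2⟩ := plIdx_spec hm a ha ha1 t
  generalize hJ : plIdx hm a ha ha1 t = k at hj1 hj2
  have e1 : ext hm a (k + m) = ext hm a k + 1 := ext_add hm a k
  have e2 : ext hm a (k + m + 1) = ext hm a (k + 1) + 1 := by
    have := ext_add hm a (k + 1)
    rw [show k + 1 + (m:ℤ) = k + m + 1 by ring] at this
    exact this
  have f1 : ext hm b (k + m) = ext hm b k + 1 := ext_add hm b k
  have f2 : ext hm b (k + m + 1) = ext hm b (k + 1) + 1 := by
    have := ext_add hm b (k + 1)
    rw [show k + 1 + (m:ℤ) = k + m + 1 by ring] at this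
    exact this
  have h1 : ext hm a (k + m) ≤ t + 1 := by linarith
  have h2 : t + 1 < ext hm a (k + m + 1) := by linarith
  rw [plF_eq hm a b ha ha1 h1 h2, plF_eq hm a b ha ha1 hj1 hj2, e1, e2, f1, f2]
  ring_nf

theorem pl_main (hm : 0 < m) (a b : Fin m → ℝ) (ha : StrictMono a)
    (ha1 : ∀ i, a i < a ⟨0, hm⟩ + 1) (hb : StrictMono b) (hb1 : ∀ i, b i < b ⟨0, hm⟩ + 1) :
    ∃ F : ℝ → ℝ, StrictMono F ∧ Function.Surjective F ∧
      (∀ t, F (t + 1) = F t + 1) ∧ ∀ i, F (a i) = b i := by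
  refine ⟨plF hm a b ha ha1, plF_strictMono hm a b ha ha1 hb hb1,
    plF_surjective hm a b ha ha1 hb hb1, plF_add_one hm a b ha ha1 hb hb1, fun i => ?_⟩
  have := plF_at hm a b ha ha1 ((i : ℕ) : ℤ)
  rwa [ext_coe hm a i, ext_coe hm b i] at this

end PLH

namespace CIR

lemma coe_eq_coe_iff' (x y : ℝ) : (x : Circle') = (y : Circle') ↔ ∃ k : ℤ, y = x + k := by
  rw [show ((x : Circle') = y) ↔ _ from QuotientAddGroup.eq]
  constructor
  · rintro ⟨k, hk⟩
    refine ⟨k, ?_⟩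
    have : (k : ℝ) = -x + y := by simpa using hk
    linarith
  · rintro ⟨k, rfl⟩
    exact ⟨k, by push_cast [AddSubgroup.mem_zmultiples_iff, zsmul_eq_mul]; ring⟩

lemma lift_eq_lift {p q : ℝ} (h : (p : Circle') = (q : Circle')) (h1 : |p - q| < 1) :
    p = q := by
  obtain ⟨k, hk⟩ := (coe_eq_coe_iff' p q).mp h
  have hk1 : |(k : ℝ)| < 1 := by
    rw [hk] at h1
    simpa using h1
  have hk2 := abs_lt.mp hk1
  have hk0 : k = 0 := by
    have hc : (-1:ℝ) < (k:ℝ) ∧ (k:ℝ) < 1 := hk2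
    have : -1 < k ∧ k < 1 := by exact_mod_cast hc
    omega
  simp [hk, hk0]

noncomputable def clift (c : ℝ) (z : Circle') : ℝ := (AddCircle.equivIco 1 c z : ℝ)

lemma clift_mem (c : ℝ) (z : Circle') : clift c z ∈ Set.Ico c (c + 1) :=
  (AddCircle.equivIco 1 c z).2

lemma clift_coe (c : ℝ) (z : Circle') : ((clift c z : ℝ) : Circle') = z :=
  (AddCircle.equivIco 1 c).symm_apply_apply z

-- integer equivariance
lemma add_int_of_add_one {F : ℝ → ℝ} (hF : ∀ t, F (t + 1) = F t + 1) (t : ℝ) (k : ℤ) :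
    F (t + k) = F t + k := by
  induction k using Int.induction_on with
  | zero => simp
  | succ n ih =>
      push_cast at ih ⊢
      rw [show t + ((n:ℝ) + 1) = (t + n) + 1 by ring, hF, ih]
      ring
  | pred n ih =>
      push_cast at ih ⊢
      have h2 := hF (t + (-(n:ℝ) - 1))
      rw [show (t + (-(n:ℝ) - 1)) + 1 = t + -(n:ℝ) by ring] at h2
      rw [show t + (-(n:ℝ) - 1) = t + -(n:ℝ) - 1 by ring] at h2 ⊢
      rw [show t + -(n:ℝ) = t + -(n:ℝ) from rfl] at ih
      have ih' : F (t + -(n:ℝ)) = F t + -(n:ℝ) := by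
        rw [show t + -(n:ℝ) = t - n by ring] at ih ⊢ <;> linarith [ih]
      rw [ih'] at h2
      linarith

/-- descend an equivariant map to the circle -/
noncomputable def cmap (F : ℝ → ℝ) (hFk : ∀ (t : ℝ) (k : ℤ), F (t + k) = F t + k) :
    Circle' → Circle' :=
  Quotient.map' F (by
    intro s t hst
    rw [QuotientAddGroup.leftRel_apply] at hst ⊢
    obtain ⟨k, hk⟩ := AddSubgroup.mem_zmultiples_iff.mp hst
    have hk' : t = s + k := by
      have : (k:ℝ) = -s + t := by simpa [zsmul_eq_mul] using hk
      linarith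
    refine AddSubgroup.mem_zmultiples_iff.mpr ⟨k, ?_⟩
    rw [hk', hFk s k]
    simp [zsmul_eq_mul])

lemma cmap_coe (F : ℝ → ℝ) (hFk : ∀ (t : ℝ) (k : ℤ), F (t + k) = F t + k) (t : ℝ) :
    cmap F hFk (t : Circle') = ((F t : ℝ) : Circle') := rfl

lemma cmap_continuous {F : ℝ → ℝ} (hFc : Continuous F)
    (hFk : ∀ (t : ℝ) (k : ℤ), F (t + k) = F t + k) : Continuous (cmap F hFk) := by
  have key : Continuous (fun t : ℝ => ((F t : ℝ) : Circle')) :=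
    (AddCircle.continuous_mk' 1).comp hFc
  exact continuous_coinduced_dom.mpr key

lemma symm_equiv (F : ℝ ≃ₜ ℝ) (hFk : ∀ (t : ℝ) (k : ℤ), F (t + k) = F t + k)
    (t : ℝ) (k : ℤ) : F.symm (t + k) = F.symm t + k :=
  F.injective (by rw [hFk, F.apply_symm_apply, F.apply_symm_apply])

/-- the circle homeomorphism induced by an equivariant homeomorphism of ℝ -/
noncomputable def circOfReal (F : ℝ ≃ₜ ℝ) (hFk : ∀ (t : ℝ) (k : ℤ), F (t + k) = F t + k) :
    Circle' ≃ₜ Circle' where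
  toFun := cmap F hFk
  invFun := cmap F.symm (symm_equiv F hFk)
  left_inv := by
    intro z
    induction z using QuotientAddGroup.induction_on with
    | H t => rw [cmap_coe, cmap_coe]; simp
  right_inv := by
    intro z
    induction z using QuotientAddGroup.induction_on with
    | H t => rw [cmap_coe, cmap_coe]; simp
  continuous_toFun := cmap_continuous F.continuous hFk
  continuous_invFun := cmap_continuous F.symm.continuous (symm_equiv F hFk)

lemma circOfReal_coe (F : ℝ ≃ₜ ℝ) (hFk : ∀ (t : ℝ) (k : ℤ), F (t + k) = F t + k) (t : ℝ) :
    circOfReal F hFk (t : Circle') = ((F t : ℝ) : Circle') :=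
  cmap_coe F hFk t



lemma po_lift {A B C : Circle'} (h : PositivelyOriented A B C) {p q r : ℝ}
    (hp : (p : Circle') = A) (hq : (q : Circle') = B) (hr : (r : Circle') = C)
    (hq1 : p < q) (hq2 : q < p + 1) (hr1 : p < r) (hr2 : r < p + 1) : q < r := by
  obtain ⟨p', q', r', hp', hq', hr', h1, h2, h3⟩ := h
  obtain ⟨k, hk⟩ := (coe_eq_coe_iff' p' p).mp (hp'.trans hp.symm)
  have hq'' : ((q' + k : ℝ) : Circle') = B := by
    rw [← hq']
    exact ((coe_eq_coe_iff' q' (q' + k)).mpr ⟨k, rfl⟩).symm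
  have hr'' : ((r' + k : ℝ) : Circle') = C := by
    rw [← hr']
    exact ((coe_eq_coe_iff' r' (r' + k)).mpr ⟨k, rfl⟩).symm
  have hb1 : p < q' + k := by rw [hk] at hq1 ⊢; linarith
  have hb2 : q' + k < p + 1 := by rw [hk]; linarith
  have hc1 : p < r' + k := by rw [hk]; linarith
  have hc2 : r' + k < p + 1 := by rw [hk]; linarith
  have heq1 : q = q' + k := by
    apply lift_eq_lift (hq.trans hq''.symm)
    rw [abs_lt]; constructor <;> linarith
  have heq2 : r = r' + k := by
    apply lift_eq_lift (hr.trans hr''.symm)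
    rw [abs_lt]; constructor <;> linarith
  rw [heq1, heq2]; linarith

lemma po_ne {A B C : Circle'} (h : PositivelyOriented A B C) :
    A ≠ B ∧ B ≠ C ∧ A ≠ C := by
  obtain ⟨p, q, r, hp, hq, hr, h1, h2, h3⟩ := h
  refine ⟨?_, ?_, ?_⟩ <;> intro hcon
  · obtain ⟨k, hk⟩ := (coe_eq_coe_iff' p q).mp (hp.trans (hcon.trans hq.symm))
    have hx : (0:ℤ) < k := by exact_mod_cast (by linarith [hk] : (0:ℝ) < (k:ℝ))
    have hy : k < (1:ℤ) := by exact_mod_cast (by linarith [hk] : ((k:ℝ)) < 1)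
    omega
  · obtain ⟨k, hk⟩ := (coe_eq_coe_iff' q r).mp (hq.trans (hcon.trans hr.symm))
    have hx : (0:ℤ) < k := by exact_mod_cast (by linarith [hk] : (0:ℝ) < (k:ℝ))
    have hy : k < (1:ℤ) := by exact_mod_cast (by linarith [hk] : ((k:ℝ)) < 1)
    omega
  · obtain ⟨k, hk⟩ := (coe_eq_coe_iff' p r).mp (hp.trans (hcon.trans hr.symm))
    have hx : (0:ℤ) < k := by exact_mod_cast (by linarith [hk] : (0:ℝ) < (k:ℝ))
    have hy : k < (1:ℤ) := by exact_mod_cast (by linarith [hk] : ((k:ℝ)) < 1)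
    omega

lemma po_asymm {A B C : Circle'} (h : PositivelyOriented A B C) :
    ¬ PositivelyOriented A C B := by
  intro h'
  obtain ⟨p, q, r, hp, hq, hr, h1, h2, h3⟩ := h
  have := po_lift h' hp hr hq (by linarith) (by linarith) (by linarith) (by linarith)
  linarith


end CIR

open CIR PLH in
lemma op_po {h : Circle' ≃ₜ Circle'} (hh : IsOrientationPreserving h) {A B C : Circle'}
    (hpo : PositivelyOriented A B C) : PositivelyOriented (h A) (h B) (h C) := by
  obtain ⟨F, hFm, hFc, hFl⟩ := hh
  obtain ⟨p, q, r, hp, hq, hr, h1, h2, h3⟩ := hpo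
  subst hp; subst hq; subst hr
  refine ⟨F p, F q, F r, (hFl p).symm, (hFl q).symm, (hFl r).symm, hFm h1, hFm h2, ?_⟩
  have := hFm h3
  rwa [hFc] at this

open CIR PLH in
lemma op_symm {h : Circle' ≃ₜ Circle'} (hh : IsOrientationPreserving h) :
    IsOrientationPreserving h.symm := by
  obtain ⟨F, hFm, hFc, hFl⟩ := hh
  refine ⟨F.symm, ?_, ?_, ?_⟩
  · intro s t hst
    have h2 := hFm.lt_iff_lt (a := F.symm s) (b := F.symm t)
    rw [F.apply_symm_apply, F.apply_symm_apply] at h2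
    exact h2.mp hst
  · intro t
    apply F.injective
    rw [hFc, F.apply_symm_apply, F.apply_symm_apply]
  · intro t
    apply h.injective
    rw [h.apply_symm_apply, hFl, F.apply_symm_apply]

open CIR PLH in
lemma po_iff_of_op {h : Circle' ≃ₜ Circle'} (hh : IsOrientationPreserving h) (A B C : Circle') :
    PositivelyOriented (h A) (h B) (h C) ↔ PositivelyOriented A B C := by
  refine ⟨fun hp => ?_, op_po hh⟩
  have := op_po (op_symm hh) hp
  simpa using this

open CIR PLH in
lemma op_orient {h : Circle' ≃ₜ Circle'} (hh : IsOrientationPreserving h) (A B C : Circle') :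
    orient (h A) (h B) (h C) = orient A B C := by
  have h1 := po_iff_of_op hh A B C
  have h2 := po_iff_of_op hh A C B
  unfold orient
  split_ifs <;> tauto

open CIR PLH in
lemma orient_eq_one_iff (A B C : Circle') : orient A B C = 1 ↔ PositivelyOriented A B C := by
  by_cases h1 : PositivelyOriented A B C
  · simp [orient, h1]
  · by_cases h2 : PositivelyOriented A C B <;> simp [orient, h1, h2]

open CIR PLH in
/-- Two `n`-tuples of points of the circle lie in the same `Homeo₊(S¹)`-orbit if and only if
they have the same coincidence pattern and the same orientation cocycle. -/
theorem statement17 (n : ℕ) (x y : Fin n → Circle') :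
    (∃ h : Circle' ≃ₜ Circle', IsOrientationPreserving h ∧ ∀ i, h (x i) = y i) ↔
      ((∀ i j, x i = x j ↔ y i = y j) ∧
        ∀ i j k, orient (x i) (x j) (x k) = orient (y i) (y j) (y k)) := by
  constructor
  · rintro ⟨h, hop, hxy⟩
    constructor
    · intro i j
      rw [← hxy i, ← hxy j]
      exact ⟨fun e => by rw [e], fun e => h.injective e⟩
    · intro i j k
      rw [← hxy i, ← hxy j, ← hxy k, op_orient hop]
  · rintro ⟨hco, hor⟩
    rcases Nat.eq_zero_or_pos n with hn | hn
    · subst hn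
      exact ⟨Homeomorph.refl _, ⟨Homeomorph.refl ℝ, fun s t hst => hst, fun t => rfl,
        fun t => rfl⟩, fun i => i.elim0⟩
    classical
    -- lifts of the points of `x` into `[0,1)`
    set L : Circle' → ℝ := clift 0 with hL
    set T : Finset ℝ := Finset.image (fun i => L (x i)) Finset.univ with hT
    set m := T.card with hmdef
    have hm : 0 < m := Finset.card_pos.mpr
      ⟨L (x ⟨0, hn⟩), Finset.mem_image_of_mem _ (Finset.mem_univ _)⟩
    have hTmem : ∀ s ∈ T, s ∈ Set.Ico (0:ℝ) 1 := by
      intro s hs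
      rw [hT, Finset.mem_image] at hs
      obtain ⟨i, _, rfl⟩ := hs
      simpa using clift_mem 0 (x i)
    set e := T.orderIsoOfFin rfl with he
    set a : Fin m → ℝ := fun i => (e i : ℝ) with ha_def
    have ha : StrictMono a := fun i j hij => by
      have : e i < e j := e.strictMono hij
      exact this
    have ha_mem : ∀ i, a i ∈ Set.Ico (0:ℝ) 1 := fun i => hTmem _ (e i).2
    have ha1 : ∀ i, a i < a ⟨0, hm⟩ + 1 := by
      intro i
      have h1 := (ha_mem i).2
      have h2 := (ha_mem ⟨0, hm⟩).1
      linarith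
    -- select indices realizing each `a i`
    have hsel' : ∀ i : Fin m, ∃ j : Fin n, L (x j) = a i := by
      intro i
      have : (a i) ∈ T := (e i).2
      rw [hT, Finset.mem_image] at this
      obtain ⟨j, _, hj⟩ := this
      exact ⟨j, hj⟩
    choose sel hsel using hsel'
    have hcoe_a : ∀ i, ((a i : ℝ) : Circle') = x (sel i) := fun i => by
      rw [← hsel i]; exact clift_coe 0 _
    have hx_ne : ∀ i j : Fin m, i ≠ j → x (sel i) ≠ x (sel j) := by
      intro i j hij hcon
      apply hij
      apply ha.injective
      rw [← hsel i, ← hsel j, hcon]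
    -- target lifts
    set c : ℝ := L (y (sel ⟨0, hm⟩)) with hc
    have hc_coe : ((c : ℝ) : Circle') = y (sel ⟨0, hm⟩) := clift_coe 0 _
    set b : Fin m → ℝ := fun i => clift c (y (sel i)) with hb_def
    have hb_coe : ∀ i, ((b i : ℝ) : Circle') = y (sel i) := fun i => clift_coe c _
    have hb_mem : ∀ i, b i ∈ Set.Ico c (c + 1) := fun i => clift_mem c _
    have hy_ne : ∀ i j : Fin m, i ≠ j → y (sel i) ≠ y (sel j) := by
      intro i j hij hcon
      exact hx_ne i j hij ((hco (sel i) (sel j)).mpr hcon)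
    have hb0 : b ⟨0, hm⟩ = c := by
      apply lift_eq_lift ((hb_coe _).trans hc_coe.symm)
      have := hb_mem ⟨0, hm⟩
      rw [abs_lt]
      constructor <;> [linarith [this.1]; linarith [this.2]]
    have hb_gt : ∀ i : Fin m, i ≠ ⟨0, hm⟩ → c < b i := by
      intro i hi
      rcases lt_or_eq_of_le (hb_mem i).1 with h | h
      · exact h
      · exfalso
        exact hy_ne i ⟨0, hm⟩ hi (by rw [← hb_coe i, ← h, hc_coe])
    have hb : StrictMono b := by
      intro i j hij
      have hj0 : j ≠ ⟨0, hm⟩ := by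
        intro hcon
        rw [hcon] at hij
        exact absurd hij (by simp [Fin.lt_def])
      rcases eq_or_ne i ⟨0, hm⟩ with hi0 | hi0
      · rw [hi0, hb0]
        exact hb_gt j hj0
      · -- 0 < i < j : use the orientation hypothesis
        have hi_pos : (⟨0, hm⟩ : Fin m) < i := by
          rw [Fin.lt_def]
          have hvi : i.val ≠ 0 := fun hc => hi0 (Fin.ext hc)
          exact Nat.pos_of_ne_zero hvi
        have hPOx : PositivelyOriented (x (sel ⟨0, hm⟩)) (x (sel i)) (x (sel j)) := by
          refine ⟨a ⟨0, hm⟩, a i, a j, hcoe_a _, hcoe_a _, hcoe_a _, ha hi_pos,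
            ha hij, ha1 j⟩
        have hPOy : PositivelyOriented (y (sel ⟨0, hm⟩)) (y (sel i)) (y (sel j)) := by
          rw [← orient_eq_one_iff, ← hor, orient_eq_one_iff]
          exact hPOx
        exact po_lift hPOy hc_coe (hb_coe i) (hb_coe j)
          (hb_gt i hi0) (hb_mem i).2 (hb_gt j hj0) (hb_mem j).2
    have hb1 : ∀ i, b i < b ⟨0, hm⟩ + 1 := by
      intro i
      rw [hb0]
      exact (hb_mem i).2
    -- build the piecewise linear homeomorphism
    obtain ⟨F, hFm, hFs, hFper, hFval⟩ := pl_main hm a b ha ha1 hb hb1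
    set Fo : ℝ ≃o ℝ := StrictMono.orderIsoOfSurjective F hFm hFs with hFo
    set Fh : ℝ ≃ₜ ℝ := Fo.toHomeomorph with hFhdef
    have hFh : ∀ t, Fh t = F t := fun t => rfl
    have hFh1 : ∀ t, Fh (t + 1) = Fh t + 1 := by
      intro t; rw [hFh, hFh]; exact hFper t
    have hFhk : ∀ (t : ℝ) (k : ℤ), Fh (t + k) = Fh t + k := fun t k =>
      add_int_of_add_one hFh1 t k
    have hFhm : StrictMono (Fh : ℝ → ℝ) := fun s t hst => by
      rw [hFh, hFh]; exact hFm hst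
    refine ⟨circOfReal Fh hFhk, ⟨Fh, hFhm, hFh1, fun t => circOfReal_coe Fh hFhk t⟩, ?_⟩
    intro j
    -- find the index realizing x j
    have hmemT : L (x j) ∈ T := by
      rw [hT, Finset.mem_image]
      exact ⟨j, Finset.mem_univ _, rfl⟩
    obtain ⟨i, hi⟩ : ∃ i : Fin m, a i = L (x j) := by
      refine ⟨e.symm ⟨L (x j), hmemT⟩, ?_⟩
      show ((e (e.symm ⟨L (x j), hmemT⟩) : {z // z ∈ T}) : ℝ) = L (x j)
      rw [OrderIso.apply_symm_apply]
    have hxj : ((a i : ℝ) : Circle') = x j := by rw [hi]; exact clift_coe 0 _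
    have step1 : circOfReal Fh hFhk (x j) = ((Fh (a i) : ℝ) : Circle') := by
      rw [← hxj]; exact circOfReal_coe Fh hFhk (a i)
    rw [step1, hFh, hFval i, hb_coe i]
    exact (hco (sel i) j).mp ((hcoe_a i).symm.trans hxj)
end
end

section
/- Let M₁ be a locally compact, second countable Hausdorff topological space and M₂ a Polish space. On the space C(M₁, M₂) of continuous maps from M₁ to M₂, the Borel σ-algebra generated by the compact-open topology coincides with the σ-algebra generated by the evaluation maps ev_p : f ↦ f(p) for p ∈ M₁ (equivalently, with the Borel σ-algebra of the topology of pointwise convergence). -/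
open MeasureTheory Set TopologicalSpace

/-- On the space `C(M₁, M₂)` of continuous maps from a locally compact second countable
Hausdorff space `M₁` to a Polish space `M₂`, the Borel σ-algebra of the compact-open topology
coincides with the σ-algebra generated by the evaluation maps `f ↦ f p`, `p ∈ M₁` (that is,
with the Borel σ-algebra of the topology of pointwise convergence). -/
theorem statement19 (M₁ M₂ : Type*) [TopologicalSpace M₁] [LocallyCompactSpace M₁]
    [SecondCountableTopology M₁] [T2Space M₁]
    [TopologicalSpace M₂] [PolishSpace M₂] :
    borel C(M₁, M₂) =
      ⨆ p : M₁, MeasurableSpace.comap (fun f : C(M₁, M₂) => f p) (borel M₂) := by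
  apply le_antisymm
  · -- hard direction: borel ≤ iSup
    rw [borel_eq_generateFrom_of_subbasis ContinuousMap.compactOpen_eq]
    apply MeasurableSpace.generateFrom_le
    rintro s ⟨K, hK, U, hU, rfl⟩
    simp only [mem_setOf_eq] at hK hU
    haveI : RegularSpace M₂ := by
      letI := upgradeIsCompletelyMetrizable M₂; infer_instance
    -- countable dense subset D of K
    obtain ⟨s₀, hs₀c, hs₀d⟩ := TopologicalSpace.exists_countable_dense K
    set D : Set M₁ := Subtype.val '' s₀ with hD
    have hDc : D.Countable := hs₀c.image _
    have hDK : D ⊆ K := by rintro _ ⟨x, -, rfl⟩; exact x.2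
    have hKD : K ⊆ closure D := by
      intro x hx
      have : (⟨x, hx⟩ : K) ∈ closure s₀ := hs₀d _
      have := (map_mem_closure continuous_subtype_val this (fun y hy => mem_image_of_mem _ hy))
      exact this
    -- candidate basis sets with closure inside U
    set T : Set (Set M₂) := {V | V ∈ countableBasis M₂ ∧ closure V ⊆ U} with hT
    have hTc : T.Countable := (countable_countableBasis M₂).mono fun V hV => hV.1
    have key : {f : C(M₁, M₂) | MapsTo f K U} =
        ⋃ F ∈ {F : Set (Set M₂) | F.Finite ∧ F ⊆ T},
          ⋂ x ∈ D, {f : C(M₁, M₂) | f x ∈ ⋃₀ F} := by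
      ext f
      simp only [mem_setOf_eq, mem_iUnion, mem_iInter, exists_prop]
      constructor
      · intro hf
        -- cover f '' K by basis elements with closure ⊆ U
        have hcov : f '' K ⊆ ⋃ V ∈ T, V := by
          intro y hy
          have hyU : y ∈ U := by rcases hy with ⟨x, hx, rfl⟩; exact hf hx
          obtain ⟨C, ⟨hCnhds, hCclosed⟩, hCU⟩ := (closed_nhds_basis y).mem_iff.1
            (hU.mem_nhds hyU)
          obtain ⟨V, hVb, hyV, hVC⟩ := (isBasis_countableBasis M₂).mem_nhds_iff.1 hCnhds
          refine mem_biUnion ⟨hVb, ?_⟩ hyV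
          exact (closure_minimal hVC hCclosed).trans hCU
        obtain ⟨F, hFT, hFfin, hFcov⟩ :=
          (hK.image (map_continuous f)).elim_finite_subcover_image
            (fun V hV => isOpen_of_mem_countableBasis hV.1) hcov
        refine ⟨F, ⟨hFfin, hFT⟩, fun x hx => ?_⟩
        have : f x ∈ f '' K := mem_image_of_mem f (hDK hx)
        rcases mem_iUnion₂.1 (hFcov this) with ⟨V, hVF, hfxV⟩
        exact ⟨V, hVF, hfxV⟩
      · rintro ⟨F, ⟨hFfin, hFT⟩, hfD⟩
        intro x hx
        have hCclosed : IsClosed (⋃ V ∈ F, closure V) :=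
          hFfin.isClosed_biUnion fun V _ => isClosed_closure
        have hDsub : D ⊆ f ⁻¹' (⋃ V ∈ F, closure V) := by
          intro z hz
          rcases hfD z hz with ⟨V, hVF, hfzV⟩
          exact mem_biUnion hVF (subset_closure hfzV)
        have hKsub : K ⊆ f ⁻¹' (⋃ V ∈ F, closure V) :=
          hKD.trans (closure_minimal hDsub (hCclosed.preimage (map_continuous f)))
        rcases mem_iUnion₂.1 (hKsub hx) with ⟨V, hVF, hfxV⟩
        exact (hFT hVF).2 hfxV
    show MeasurableSet[⨆ p : M₁, MeasurableSpace.comap (fun f : C(M₁, M₂) => f p) (borel M₂)]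
      {f : C(M₁, M₂) | MapsTo f K U}
    rw [key]
    apply MeasurableSet.biUnion (countable_setOf_finite_subset hTc)
    rintro F ⟨hFfin, hFT⟩
    apply MeasurableSet.biInter hDc
    intro x hx
    have hWopen : IsOpen (⋃₀ F) := isOpen_sUnion fun V hV =>
      isOpen_of_mem_countableBasis (hFT hV).1
    have : MeasurableSet[MeasurableSpace.comap (fun f : C(M₁, M₂) => f x) (borel M₂)]
        {f : C(M₁, M₂) | f x ∈ ⋃₀ F} :=
      ⟨⋃₀ F, MeasurableSpace.measurableSet_generateFrom hWopen, rfl⟩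
    exact (le_iSup (fun p : M₁ => MeasurableSpace.comap
      (fun f : C(M₁, M₂) => f p) (borel M₂)) x) _ this
  · -- easy direction
    refine iSup_le fun p => ?_
    rw [borel, MeasurableSpace.comap_generateFrom]
    apply MeasurableSpace.generateFrom_le
    rintro s ⟨U, hU, rfl⟩
    refine MeasurableSpace.measurableSet_generateFrom ?_
    simp only [Set.mem_setOf_eq]
    exact hU.preimage (continuous_eval_const p)
end
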